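/- arXiv:2306.17355 — 10 statements merged into one kernel-verified Lean document; each statement's English description precedes it below -/
import Mathlib

section
/- For each t ∈ {1, …, T}, the interim payoff function v ↦ Π_t(v) is differentiable at every v in the open interval (vlo, vhi), with derivative Π_t'(v) = δ^(t−1) · F( min( max(v, v_t), v_{t−1} ) )^(N−1). -/
/-- Interim payoff `Π_t(v)` from entering the period-`t` auction:
`Π_t(v) = δ^(t-1) · ( ∫_{v_t}^{min(max(v,v_t),v_{t-1})} (v-x)·(N-1)·F(x)^(N-2)·f(x) dx
          + (v - r_t)·F(v_t)^(N-1) - F(v_{t-1})^(N-1)·K )`. -/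
noncomputable def PiPayoff (δ : ℝ) (N : ℕ) (K : ℝ) (r : ℕ → ℝ) (F f : ℝ → ℝ)
    (vt : ℕ → ℝ) (t : ℕ) (v : ℝ) : ℝ :=
  δ ^ (t - 1) *
    ((∫ x in (vt t)..(min (max v (vt t)) (vt (t - 1))),
        (v - x) * ((N : ℝ) - 1) * F x ^ (N - 2) * f x)
      + (v - r t) * F (vt t) ^ (N - 1) - F (vt (t - 1)) ^ (N - 1) * K)

/-- For each `t ∈ {1,…,T}`, the interim payoff `v ↦ Π_t(v)` is differentiable at every
`v ∈ (vlo, vhi)` with derivative `δ^(t-1) · F(min(max(v,v_t),v_{t-1}))^(N-1)`. -/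
theorem pi_payoff_hasDerivAt
    (vlo vhi : ℝ) (hlohi : vlo < vhi)
    (N : ℕ) (hN : 2 ≤ N)
    (K : ℝ) (hK : 0 < K)
    (δ : ℝ) (hδ0 : 0 < δ) (hδ1 : δ < 1)
    (T : ℕ) (hT : 1 ≤ T)
    (r : ℕ → ℝ)
    (F f : ℝ → ℝ)
    (hFderiv : ∀ x ∈ Set.Icc vlo vhi, HasDerivAt F (f x) x)
    (hfcont : ContinuousOn f (Set.Icc vlo vhi))
    (hFmono : MonotoneOn F (Set.Icc vlo vhi))
    (vt : ℕ → ℝ)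
    (hv0 : vt 0 = vhi)
    (hvmono : ∀ t, 1 ≤ t → t ≤ T → vt t ≤ vt (t - 1))
    (hvT : vlo ≤ vt T) :
    ∀ t, 1 ≤ t → t ≤ T → ∀ w ∈ Set.Ioo vlo vhi,
      HasDerivAt (fun v => PiPayoff δ N K r F f vt t v)
        (δ ^ (t - 1) * F (min (max w (vt t)) (vt (t - 1))) ^ (N - 1)) w := by
  intro t ht1 htT w hw
  -- monotonicity of the threshold sequence on [0, T]
  have hmono : ∀ j, j ≤ T → ∀ i, i ≤ j → vt j ≤ vt i := by
    intro j
    induction j with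
    | zero => intro _ i hi; obtain rfl := Nat.le_zero.mp hi; exact le_rfl
    | succ n ih =>
      intro hj i hi
      rcases Nat.eq_or_lt_of_le hi with h | h
      · rw [h]
      · have step : vt (n + 1) ≤ vt n := by
          have := hvmono (n + 1) (Nat.le_add_left 1 n) hj
          simpa using this
        exact step.trans (ih (Nat.le_of_succ_le hj) i (Nat.lt_succ_iff.mp h))
  set a := vt t with ha
  set b := vt (t - 1) with hb
  have hab : a ≤ b := hvmono t ht1 htT
  have hta : vlo ≤ a := hvT.trans (hmono T le_rfl t htT)
  have htb : b ≤ vhi := by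
    rw [hb, ← hv0]
    exact hmono (t - 1) (le_trans (Nat.sub_le t 1) htT) 0 (Nat.zero_le _)
  -- continuity of F on [vlo, vhi]
  have hFcont : ContinuousOn F (Set.Icc vlo vhi) := fun x hx =>
    (hFderiv x hx).continuousAt.continuousWithinAt
  have hcast : ((N - 1 : ℕ) : ℝ) = (N : ℝ) - 1 := by
    rw [Nat.cast_sub (by omega : 1 ≤ N)]; norm_num
  have hexp : N - 1 - 1 = N - 2 := by omega
  -- the clamp map and its basic properties
  have hmem : ∀ y : ℝ, min (max y a) b ∈ Set.Icc a b := fun y =>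
    ⟨le_min (le_max_right _ _) hab, min_le_right _ _⟩
  have hsubI : Set.Icc a b ⊆ Set.Icc vlo vhi := Set.Icc_subset_Icc hta htb
  -- continuity of the clamped integrand
  have hccont : Continuous (fun y : ℝ => min (max y a) b) :=
    (continuous_id.max continuous_const).min continuous_const
  have hGccont : Continuous (fun y : ℝ => F (min (max y a) b) ^ (N - 1)) :=
    (hFcont.comp_continuous hccont (fun y => hsubI (hmem y))).pow _
  -- key identity: Π_t(v) = δ^(t-1)·( ∫_a^v F(clamp y)^(N-1) dy + (a - r t)·F(a)^(N-1) - F(b)^(N-1)·K )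
  have key : ∀ v : ℝ, PiPayoff δ N K r F f vt t v =
      δ ^ (t - 1) * ((∫ y in a..v, F (min (max y a) b) ^ (N - 1))
        + (a - r t) * F a ^ (N - 1) - F b ^ (N - 1) * K) := by
    intro v
    set m := min (max v a) b with hm
    have ham : a ≤ m := (hmem v).1
    have hmb : m ≤ b := (hmem v).2
    have hsub : Set.uIcc a m ⊆ Set.Icc vlo vhi := by
      rw [Set.uIcc_of_le ham]
      exact (Set.Icc_subset_Icc le_rfl hmb).trans hsubI
    -- integration by parts
    have hu : ∀ x ∈ Set.uIcc a m, HasDerivAt (fun y => (v - y) * F y ^ (N - 1))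
        ((v - x) * ((N : ℝ) - 1) * F x ^ (N - 2) * f x - F x ^ (N - 1)) x := by
      intro x hx
      have hF := hFderiv x (hsub hx)
      have hG := hF.fun_pow (N - 1)
      have h1 : HasDerivAt (fun y : ℝ => v - y) (-1) x := by
        simpa using (hasDerivAt_id x).const_sub v
      have := h1.fun_mul hG
      refine this.congr_deriv ?_
      rw [hcast, hexp]
      ring
    have hcont1 : ContinuousOn
        (fun x => (v - x) * ((N : ℝ) - 1) * F x ^ (N - 2) * f x - F x ^ (N - 1))
        (Set.uIcc a m) := by
      apply ContinuousOn.sub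
      · exact (((continuousOn_const.sub continuousOn_id).mul continuousOn_const).mul
          ((hFcont.mono hsub).pow _)).mul (hfcont.mono hsub)
      · exact (hFcont.mono hsub).pow _
    have hint : IntervalIntegrable
        (fun x => (v - x) * ((N : ℝ) - 1) * F x ^ (N - 2) * f x - F x ^ (N - 1))
        MeasureTheory.volume a m := hcont1.intervalIntegrable
    have hGint : IntervalIntegrable (fun x => F x ^ (N - 1)) MeasureTheory.volume a m :=
      ((hFcont.mono hsub).pow _).intervalIntegrable
    have hftc : (∫ x in a..m,
        ((v - x) * ((N : ℝ) - 1) * F x ^ (N - 2) * f x - F x ^ (N - 1))) =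
        (v - m) * F m ^ (N - 1) - (v - a) * F a ^ (N - 1) :=
      intervalIntegral.integral_eq_sub_of_hasDerivAt hu hint
    have hibp : (∫ x in a..m, (v - x) * ((N : ℝ) - 1) * F x ^ (N - 2) * f x) =
        (v - m) * F m ^ (N - 1) - (v - a) * F a ^ (N - 1)
          + ∫ x in a..m, F x ^ (N - 1) := by
      rw [← hftc, ← intervalIntegral.integral_add hint hGint]
      congr 1; funext x; ring
    -- characterize the clamped integral
    have hH : (∫ y in a..v, F (min (max y a) b) ^ (N - 1)) =
        (v - m) * F m ^ (N - 1) + ∫ x in a..m, F x ^ (N - 1) := by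
      rcases le_total v a with h | h
      · have hma : m = a := by rw [hm, max_eq_right h, min_eq_left hab]
        have h1 : (∫ y in a..v, F (min (max y a) b) ^ (N - 1)) =
            ∫ _y in a..v, F a ^ (N - 1) := by
          apply intervalIntegral.integral_congr
          intro y hy
          rw [Set.uIcc_of_ge h] at hy
          simp only [max_eq_right hy.2, min_eq_left hab]
        rw [h1, intervalIntegral.integral_const, hma, intervalIntegral.integral_same,
          smul_eq_mul]
        ring
      · rcases le_total v b with h2 | h2
        · have hmv : m = v := by rw [hm, max_eq_left h, min_eq_left h2]
          have h1 : (∫ y in a..v, F (min (max y a) b) ^ (N - 1)) =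
              ∫ y in a..v, F y ^ (N - 1) := by
            apply intervalIntegral.integral_congr
            intro y hy
            rw [Set.uIcc_of_le h] at hy
            simp only [max_eq_left hy.1, min_eq_left (hy.2.trans h2)]
          rw [h1, hmv]; ring
        · have hmb' : m = b := by
            rw [hm, max_eq_left (hab.trans h2), min_eq_right h2]
          have hsplit : (∫ y in a..v, F (min (max y a) b) ^ (N - 1)) =
              (∫ y in a..b, F (min (max y a) b) ^ (N - 1))
                + ∫ y in b..v, F (min (max y a) b) ^ (N - 1) :=
            (intervalIntegral.integral_add_adjacent_intervals
              (hGccont.intervalIntegrable _ _) (hGccont.intervalIntegrable _ _)).symm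
          have h1 : (∫ y in a..b, F (min (max y a) b) ^ (N - 1)) =
              ∫ y in a..b, F y ^ (N - 1) := by
            apply intervalIntegral.integral_congr
            intro y hy
            rw [Set.uIcc_of_le hab] at hy
            simp only [max_eq_left hy.1, min_eq_left hy.2]
          have h2' : (∫ y in b..v, F (min (max y a) b) ^ (N - 1)) =
              ∫ _y in b..v, F b ^ (N - 1) := by
            apply intervalIntegral.integral_congr
            intro y hy
            rw [Set.uIcc_of_le h2] at hy
            simp only [max_eq_left (hab.trans hy.1), min_eq_right hy.1]
          rw [hsplit, h1, h2', intervalIntegral.integral_const, hmb', smul_eq_mul]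
          ring
    rw [PiPayoff, ← ha, ← hb, ← hm, hibp, hH]
    ring
  -- differentiate
  have hHd : HasDerivAt (fun u => ∫ y in a..u, F (min (max y a) b) ^ (N - 1))
      (F (min (max w a) b) ^ (N - 1)) w :=
    intervalIntegral.integral_hasDerivAt_right (hGccont.intervalIntegrable a w)
      (hGccont.stronglyMeasurable.stronglyMeasurableAtFilter) hGccont.continuousAt
  have hfinal : HasDerivAt (fun v => δ ^ (t - 1) *
      ((∫ y in a..v, F (min (max y a) b) ^ (N - 1))
        + (a - r t) * F a ^ (N - 1) - F b ^ (N - 1) * K))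
      (δ ^ (t - 1) * F (min (max w a) b) ^ (N - 1)) w :=
    ((hHd.add_const _).sub_const _).const_mul _
  have hfun : (fun v => PiPayoff δ N K r F f vt t v) =
      fun v => δ ^ (t - 1) * ((∫ y in a..v, F (min (max y a) b) ^ (N - 1))
        + (a - r t) * F a ^ (N - 1) - F b ^ (N - 1) * K) := funext key
  rw [hfun]
  exact hfinal
end

section
/- (Single-crossing lemma.) Let 1 ≤ t < t' ≤ T and suppose F(v_{t'}) > 0. Then the function v ↦ Π_t(v) − Π_{t'}(v) is strictly increasing on [vlo, vhi]. Moreover, if F(v_T) > 0, then Π_T − Π_{T+1} = Π_T is strictly increasing on [vlo, vhi]. -/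
open Set MeasureTheory Filter Topology

/-- Derivative of a monotone differentiable function is nonnegative on the interval. -/
private lemma aux_f_nonneg {vlo vhi : ℝ} {F f : ℝ → ℝ} (hlohi : vlo < vhi)
    (hFderiv : ∀ x ∈ Set.Icc vlo vhi, HasDerivAt F (f x) x)
    (hFmono : MonotoneOn F (Set.Icc vlo vhi)) :
    ∀ x ∈ Set.Icc vlo vhi, 0 ≤ f x := by
  intro x hx
  have hd := hFderiv x hx
  rw [hasDerivAt_iff_tendsto_slope] at hd
  rcases lt_or_eq_of_le hx.2 with hxv | hxv
  · -- x < vhi : use slopes from the right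
    have hsub : Set.Ioo x vhi ⊆ {x}ᶜ := fun y hy => (ne_of_gt hy.1)
    have hne : (𝓝[Set.Ioo x vhi] x).NeBot := by
      apply mem_closure_iff_nhdsWithin_neBot.1
      rw [closure_Ioo hxv.ne]
      exact ⟨le_rfl, hxv.le⟩
    have hd' : Filter.Tendsto (slope F x) (𝓝[Set.Ioo x vhi] x) (𝓝 (f x)) :=
      hd.mono_left (nhdsWithin_mono x hsub)
    refine ge_of_tendsto hd' ?_
    filter_upwards [self_mem_nhdsWithin] with y hy
    have hyI : y ∈ Set.Icc vlo vhi := ⟨le_trans hx.1 hy.1.le, hy.2.le⟩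
    rw [slope_def_field]
    exact div_nonneg (sub_nonneg.2 (hFmono hx hyI hy.1.le)) (sub_nonneg.2 hy.1.le)
  · -- x = vhi : use slopes from the left
    have hsub : Set.Ioo vlo vhi ⊆ {x}ᶜ := fun y hy => (ne_of_lt (hxv ▸ hy.2))
    have hne : (𝓝[Set.Ioo vlo vhi] x).NeBot := by
      apply mem_closure_iff_nhdsWithin_neBot.1
      rw [closure_Ioo hlohi.ne]
      exact ⟨hxv ▸ hlohi.le, hxv ▸ le_rfl⟩
    have hd' : Filter.Tendsto (slope F x) (𝓝[Set.Ioo vlo vhi] x) (𝓝 (f x)) :=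
      hd.mono_left (nhdsWithin_mono x hsub)
    refine ge_of_tendsto hd' ?_
    filter_upwards [self_mem_nhdsWithin] with y hy
    have hyI : y ∈ Set.Icc vlo vhi := ⟨hy.1.le, hy.2.le⟩
    have hyx : y < x := hxv ▸ hy.2
    rw [slope_def_field]
    rw [show (F y - F x) / (y - x) = (F x - F y) / (x - y) by
      rw [← neg_sub (F x) (F y), ← neg_sub x y, neg_div_neg_eq]]
    exact div_nonneg (sub_nonneg.2 (hFmono hyI hx hyx.le)) (sub_nonneg.2 hyx.le)

/-- FTC for the kernel `(N-1) F^(N-2) f`, the derivative of `F^(N-1)`. -/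
private lemma aux_ftc {vlo vhi : ℝ} {F f : ℝ → ℝ} {N : ℕ} (hN : 2 ≤ N)
    (hFderiv : ∀ x ∈ Set.Icc vlo vhi, HasDerivAt F (f x) x)
    (hfcont : ContinuousOn f (Set.Icc vlo vhi))
    (p q : ℝ) (hp : p ∈ Set.Icc vlo vhi) (hq : q ∈ Set.Icc vlo vhi) :
    ∫ x in p..q, ((N : ℝ) - 1) * F x ^ (N - 2) * f x
      = F q ^ (N - 1) - F p ^ (N - 1) := by
  have hsub : Set.uIcc p q ⊆ Set.Icc vlo vhi := Set.uIcc_subset_Icc hp hq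
  have hFcont : ContinuousOn F (Set.Icc vlo vhi) := fun x hx =>
    (hFderiv x hx).continuousAt.continuousWithinAt
  refine intervalIntegral.integral_eq_sub_of_hasDerivAt (f := fun y => F y ^ (N - 1)) ?_ ?_
  · intro x hx
    have h := (hFderiv x (hsub hx)).pow (N - 1)
    have h1 : ((N - 1 : ℕ) : ℝ) = (N : ℝ) - 1 := by
      rw [Nat.cast_sub (by omega)]; norm_num
    have h2 : N - 1 - 1 = N - 2 := by omega
    rw [h2, h1] at h
    exact h
  · exact ((continuousOn_const.mul ((hFcont.mono hsub).pow _)).mul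
      (hfcont.mono hsub)).intervalIntegrable

/-- Key integral bounds for the auction-payoff integral term. -/
private lemma aux_key {vlo vhi : ℝ} {F f : ℝ → ℝ} {N : ℕ} (hlohi : vlo < vhi) (hN : 2 ≤ N)
    (hFderiv : ∀ x ∈ Set.Icc vlo vhi, HasDerivAt F (f x) x)
    (hfcont : ContinuousOn f (Set.Icc vlo vhi))
    (hFmono : MonotoneOn F (Set.Icc vlo vhi))
    (a b : ℝ) (hab : a ≤ b) (ha : vlo ≤ a) (hb : b ≤ vhi) (hFa : 0 ≤ F a)
    (v1 v2 : ℝ) (h12 : v1 ≤ v2) :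
    0 ≤ (∫ x in a..(min (max v2 a) b), (v2 - x) * ((N : ℝ) - 1) * F x ^ (N - 2) * f x)
        - (∫ x in a..(min (max v1 a) b), (v1 - x) * ((N : ℝ) - 1) * F x ^ (N - 2) * f x) ∧
    (∫ x in a..(min (max v2 a) b), (v2 - x) * ((N : ℝ) - 1) * F x ^ (N - 2) * f x)
        - (∫ x in a..(min (max v1 a) b), (v1 - x) * ((N : ℝ) - 1) * F x ^ (N - 2) * f x)
      ≤ (v2 - v1) * (F b ^ (N - 1) - F a ^ (N - 1)) := by
  have hFcont : ContinuousOn F (Set.Icc vlo vhi) := fun x hx =>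
    (hFderiv x hx).continuousAt.continuousWithinAt
  have hfnn := aux_f_nonneg hlohi hFderiv hFmono
  set c1 := min (max v1 a) b with hc1def
  set c2 := min (max v2 a) b with hc2def
  have hac1 : a ≤ c1 := le_min (le_max_right _ _) hab
  have hc1b : c1 ≤ b := min_le_right _ _
  have hac2 : a ≤ c2 := le_min (le_max_right _ _) hab
  have hc2b : c2 ≤ b := min_le_right _ _
  have hc12 : c1 ≤ c2 := min_le_min (max_le_max h12 le_rfl) le_rfl
  have haI : a ∈ Set.Icc vlo vhi := ⟨ha, le_trans hab hb⟩
  have hbI : b ∈ Set.Icc vlo vhi := ⟨le_trans ha hab, hb⟩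
  have hc1I : c1 ∈ Set.Icc vlo vhi := ⟨le_trans ha hac1, le_trans hc1b hb⟩
  have hc2I : c2 ∈ Set.Icc vlo vhi := ⟨le_trans ha hac2, le_trans hc2b hb⟩
  -- integrability of all integrands
  have hint : ∀ (v p q : ℝ), p ∈ Set.Icc vlo vhi → q ∈ Set.Icc vlo vhi →
      IntervalIntegrable (fun x => (v - x) * ((N : ℝ) - 1) * F x ^ (N - 2) * f x)
        volume p q := by
    intro v p q hp hq
    have hsub : Set.uIcc p q ⊆ Set.Icc vlo vhi := Set.uIcc_subset_Icc hp hq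
    exact ((((continuousOn_const.sub continuousOn_id).mul continuousOn_const).mul
      ((hFcont.mono hsub).pow _)).mul ((hfcont.mono hsub))).intervalIntegrable
  have hint2 : ∀ (v p q : ℝ), p ∈ Set.Icc vlo vhi → q ∈ Set.Icc vlo vhi →
      IntervalIntegrable (fun x => (v2 - v1) * (((N : ℝ) - 1) * F x ^ (N - 2) * f x))
        volume p q := by
    intro v p q hp hq
    have hsub : Set.uIcc p q ⊆ Set.Icc vlo vhi := Set.uIcc_subset_Icc hp hq
    exact (continuousOn_const.mul ((continuousOn_const.mul
      ((hFcont.mono hsub).pow _)).mul ((hfcont.mono hsub)))).intervalIntegrable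
  -- split the integral for v2 at c1
  have hsplit : (∫ x in a..c2, (v2 - x) * ((N : ℝ) - 1) * F x ^ (N - 2) * f x)
      = (∫ x in a..c1, (v2 - x) * ((N : ℝ) - 1) * F x ^ (N - 2) * f x)
        + (∫ x in c1..c2, (v2 - x) * ((N : ℝ) - 1) * F x ^ (N - 2) * f x) :=
    (intervalIntegral.integral_add_adjacent_intervals
      (hint v2 a c1 haI hc1I) (hint v2 c1 c2 hc1I hc2I)).symm
  -- first piece: difference over [a, c1]
  have h1 : (∫ x in a..c1, (v2 - x) * ((N : ℝ) - 1) * F x ^ (N - 2) * f x)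
      - (∫ x in a..c1, (v1 - x) * ((N : ℝ) - 1) * F x ^ (N - 2) * f x)
      = (v2 - v1) * (F c1 ^ (N - 1) - F a ^ (N - 1)) := by
    rw [← intervalIntegral.integral_sub (hint v2 a c1 haI hc1I) (hint v1 a c1 haI hc1I)]
    rw [intervalIntegral.integral_congr
      (g := fun x => (v2 - v1) * (((N : ℝ) - 1) * F x ^ (N - 2) * f x))
      (fun x _ => by ring)]
    rw [intervalIntegral.integral_const_mul, aux_ftc hN hFderiv hfcont a c1 haI hc1I]
  -- the remainder J over [c1, c2]
  set J := (∫ x in c1..c2, (v2 - x) * ((N : ℝ) - 1) * F x ^ (N - 2) * f x) with hJdef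
  have hFmono' : ∀ p q : ℝ, p ∈ Set.Icc vlo vhi → q ∈ Set.Icc vlo vhi → a ≤ p → p ≤ q →
      F p ^ (N - 1) ≤ F q ^ (N - 1) := by
    intro p q hp hq hap hpq
    exact pow_le_pow_left₀ (le_trans hFa (hFmono haI hp hap)) (hFmono hp hq hpq) _
  have hJbounds : 0 ≤ J ∧ J ≤ (v2 - v1) * (F c2 ^ (N - 1) - F c1 ^ (N - 1)) := by
    rcases lt_or_ge v2 a with hA | hA
    · -- degenerate: both clamps equal a
      have e2 : c2 = a := by rw [hc2def, max_eq_right hA.le, min_eq_left hab]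
      have e1 : c1 = a := by
        rw [hc1def, max_eq_right (le_trans h12 hA.le), min_eq_left hab]
      have : J = 0 := by rw [hJdef, e1, e2, intervalIntegral.integral_same]
      rw [this, e1, e2]
      simp
    · rcases lt_or_ge v1 b with hB | hB
      · -- generic case : v1 ≤ c1 and c2 ≤ v2
        have hv1c1 : v1 ≤ c1 := by
          rcases le_or_gt v1 a with h | h
          · exact le_trans h hac1
          · rw [hc1def, max_eq_left h.le]; exact le_min le_rfl hB.le
        have hc2v2 : c2 ≤ v2 := by
          rw [hc2def, max_eq_left hA]; exact min_le_left _ _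
        constructor
        · apply intervalIntegral.integral_nonneg hc12
          intro x hx
          have hxI : x ∈ Set.Icc vlo vhi :=
            ⟨le_trans hc1I.1 hx.1, le_trans hx.2 hc2I.2⟩
          have hFx : 0 ≤ F x := le_trans hFa (hFmono haI hxI (le_trans hac1 hx.1))
          have : (0:ℝ) ≤ v2 - x := sub_nonneg.2 (le_trans hx.2 hc2v2)
          have hNn : (0:ℝ) ≤ (N : ℝ) - 1 := by
            have : (2:ℝ) ≤ N := by exact_mod_cast hN
            linarith
          exact mul_nonneg (mul_nonneg (mul_nonneg this hNn) (pow_nonneg hFx _))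
            (hfnn x hxI)
        · have hmono : J ≤ ∫ x in c1..c2,
              (v2 - v1) * (((N : ℝ) - 1) * F x ^ (N - 2) * f x) := by
            apply intervalIntegral.integral_mono_on hc12
              (hint v2 c1 c2 hc1I hc2I) (hint2 v2 c1 c2 hc1I hc2I)
            intro x hx
            have hxI : x ∈ Set.Icc vlo vhi :=
              ⟨le_trans hc1I.1 hx.1, le_trans hx.2 hc2I.2⟩
            have hFx : 0 ≤ F x := le_trans hFa (hFmono haI hxI (le_trans hac1 hx.1))
            have hNn : (0:ℝ) ≤ (N : ℝ) - 1 := by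
              have : (2:ℝ) ≤ N := by exact_mod_cast hN
              linarith
            have hrest : (0:ℝ) ≤ ((N : ℝ) - 1) * F x ^ (N - 2) * f x :=
              mul_nonneg (mul_nonneg hNn (pow_nonneg hFx _)) (hfnn x hxI)
            calc (v2 - x) * ((N : ℝ) - 1) * F x ^ (N - 2) * f x
                = (v2 - x) * (((N : ℝ) - 1) * F x ^ (N - 2) * f x) := by ring
              _ ≤ (v2 - v1) * (((N : ℝ) - 1) * F x ^ (N - 2) * f x) := by
                  apply mul_le_mul_of_nonneg_right _ hrest
                  have : v1 ≤ x := le_trans hv1c1 hx.1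
                  linarith
          rw [intervalIntegral.integral_const_mul,
            aux_ftc hN hFderiv hfcont c1 c2 hc1I hc2I] at hmono
          exact hmono
      · -- degenerate: both clamps equal b
        have e1 : c1 = b := by
          rw [hc1def, min_eq_right (le_trans hB (le_max_left _ _))]
        have e2 : c2 = b := by
          rw [hc2def, min_eq_right (le_trans (le_trans hB h12) (le_max_left _ _))]
        have : J = 0 := by rw [hJdef, e1, e2, intervalIntegral.integral_same]
        rw [this, e1, e2]
        simp
  have hGa1 : F a ^ (N - 1) ≤ F c1 ^ (N - 1) := hFmono' a c1 haI hc1I le_rfl hac1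
  have hG2b : F c2 ^ (N - 1) ≤ F b ^ (N - 1) := hFmono' c2 b hc2I hbI hac2 hc2b
  constructor
  · rw [hsplit]
    have h12' : (0:ℝ) ≤ v2 - v1 := sub_nonneg.2 h12
    nlinarith [hJbounds.1]
  · rw [hsplit]
    have h12' : (0:ℝ) ≤ v2 - v1 := sub_nonneg.2 h12
    nlinarith [hJbounds.2]

/-- Per-period payoff difference bounds. -/
private lemma aux_Pi {vlo vhi : ℝ} {F f : ℝ → ℝ} {N : ℕ} (hlohi : vlo < vhi) (hN : 2 ≤ N)
    (K : ℝ) (δ : ℝ) (hδ0 : 0 < δ) (r : ℕ → ℝ)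
    (hFderiv : ∀ x ∈ Set.Icc vlo vhi, HasDerivAt F (f x) x)
    (hfcont : ContinuousOn f (Set.Icc vlo vhi))
    (hFmono : MonotoneOn F (Set.Icc vlo vhi))
    (vt : ℕ → ℝ) (s : ℕ)
    (hab : vt s ≤ vt (s - 1)) (ha : vlo ≤ vt s) (hb : vt (s - 1) ≤ vhi)
    (hFa : 0 ≤ F (vt s)) (v1 v2 : ℝ) (h12 : v1 ≤ v2) :
    δ ^ (s - 1) * ((v2 - v1) * F (vt s) ^ (N - 1))
        ≤ PiPayoff δ N K r F f vt s v2 - PiPayoff δ N K r F f vt s v1 ∧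
    PiPayoff δ N K r F f vt s v2 - PiPayoff δ N K r F f vt s v1
        ≤ δ ^ (s - 1) * ((v2 - v1) * F (vt (s - 1)) ^ (N - 1)) := by
  obtain ⟨k1, k2⟩ := aux_key hlohi hN hFderiv hfcont hFmono (vt s) (vt (s - 1))
    hab ha hb hFa v1 v2 h12
  have hδp : (0:ℝ) ≤ δ ^ (s - 1) := pow_nonneg hδ0.le _
  simp only [PiPayoff]
  constructor
  · nlinarith [k1, hδp]
  · nlinarith [k2, hδp]

/-- Single-crossing lemma: for `1 ≤ t < t' ≤ T` with `F(v_{t'}) > 0`, the map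
`v ↦ Π_t(v) − Π_{t'}(v)` is strictly increasing on `[vlo, vhi]`; moreover if
`F(v_T) > 0` then `Π_T − Π_{T+1} = Π_T` is strictly increasing on `[vlo, vhi]`. -/
theorem single_crossing
    (vlo vhi : ℝ) (hlohi : vlo < vhi)
    (N : ℕ) (hN : 2 ≤ N)
    (K : ℝ) (hK : 0 < K)
    (δ : ℝ) (hδ0 : 0 < δ) (hδ1 : δ < 1)
    (T : ℕ) (hT : 1 ≤ T)
    (r : ℕ → ℝ)
    (F f : ℝ → ℝ)
    (hFderiv : ∀ x ∈ Set.Icc vlo vhi, HasDerivAt F (f x) x)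
    (hfcont : ContinuousOn f (Set.Icc vlo vhi))
    (hFmono : MonotoneOn F (Set.Icc vlo vhi))
    (vt : ℕ → ℝ)
    (hv0 : vt 0 = vhi)
    (hvmono : ∀ t, 1 ≤ t → t ≤ T → vt t ≤ vt (t - 1))
    (hvT : vlo ≤ vt T) :
    (∀ t t', 1 ≤ t → t < t' → t' ≤ T → 0 < F (vt t') →
      StrictMonoOn (fun v => PiPayoff δ N K r F f vt t v - PiPayoff δ N K r F f vt t' v)
        (Set.Icc vlo vhi)) ∧
    (0 < F (vt T) →
      StrictMonoOn (fun v => PiPayoff δ N K r F f vt T v) (Set.Icc vlo vhi)) := by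
  -- vt is antitone on [0, T]
  have hanti : ∀ s', s' ≤ T → ∀ s, s ≤ s' → vt s' ≤ vt s := by
    intro s'
    induction s' with
    | zero =>
      intro _ s hs
      have : s = 0 := Nat.le_zero.mp hs
      rw [this]
    | succ n ih =>
      intro hT' s hs
      rcases Nat.lt_or_ge s (n + 1) with h | h
      · have step : vt (n + 1) ≤ vt n := by
          have := hvmono (n + 1) (by omega) hT'
          simpa using this
        exact le_trans step (ih (by omega) s (by omega))
      · have : s = n + 1 := by omega
        rw [this]
  have hvtIcc : ∀ s, s ≤ T → vt s ∈ Set.Icc vlo vhi := by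
    intro s hs
    refine ⟨le_trans hvT (hanti T le_rfl s hs), ?_⟩
    have := hanti s hs 0 (Nat.zero_le s)
    rw [hv0] at this
    exact this
  constructor
  · intro t t' ht1 htt' ht'T hFt'
    intro v1 hv1 v2 hv2 h12
    have htT : t ≤ T := le_trans htt'.le ht'T
    have htm1T : t - 1 ≤ T := by omega
    have ht'm1T : t' - 1 ≤ T := by omega
    -- F values along the thresholds
    have hFt : 0 < F (vt t) :=
      lt_of_lt_of_le hFt' (hFmono (hvtIcc t' ht'T) (hvtIcc t htT) (hanti t' ht'T t htt'.le))
    have hFt'm1 : 0 < F (vt (t' - 1)) :=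
      lt_of_lt_of_le hFt' (hFmono (hvtIcc t' ht'T) (hvtIcc (t' - 1) ht'm1T)
        (hvmono t' (by omega) ht'T))
    -- bounds for period t
    obtain ⟨L, _⟩ := aux_Pi hlohi hN K δ hδ0 r hFderiv hfcont hFmono vt t
      (hvmono t ht1 htT) (hvtIcc t htT).1 (hvtIcc (t - 1) htm1T).2 hFt.le v1 v2 h12.le
    obtain ⟨_, U⟩ := aux_Pi hlohi hN K δ hδ0 r hFderiv hfcont hFmono vt t'
      (hvmono t' (by omega) ht'T) (hvtIcc t' ht'T).1 (hvtIcc (t' - 1) ht'm1T).2 hFt'.le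
      v1 v2 h12.le
    -- compare the two bounds
    have hGle : F (vt (t' - 1)) ^ (N - 1) ≤ F (vt t) ^ (N - 1) := by
      apply pow_le_pow_left₀ hFt'm1.le
      exact hFmono (hvtIcc (t' - 1) ht'm1T) (hvtIcc t htT) (hanti (t' - 1) ht'm1T t (by omega))
    have hGpos : 0 < F (vt t) ^ (N - 1) := pow_pos hFt _
    have hδlt : δ ^ (t' - 1) < δ ^ (t - 1) :=
      pow_lt_pow_right_of_lt_one₀ hδ0 hδ1 (by omega)
    have hδ'nn : (0:ℝ) ≤ δ ^ (t' - 1) := pow_nonneg hδ0.le _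
    have hv12 : (0:ℝ) < v2 - v1 := sub_pos.2 h12
    have key : δ ^ (t' - 1) * ((v2 - v1) * F (vt (t' - 1)) ^ (N - 1))
        < δ ^ (t - 1) * ((v2 - v1) * F (vt t) ^ (N - 1)) := by
      calc δ ^ (t' - 1) * ((v2 - v1) * F (vt (t' - 1)) ^ (N - 1))
          ≤ δ ^ (t' - 1) * ((v2 - v1) * F (vt t) ^ (N - 1)) := by
            apply mul_le_mul_of_nonneg_left _ hδ'nn
            exact mul_le_mul_of_nonneg_left hGle hv12.le
        _ < δ ^ (t - 1) * ((v2 - v1) * F (vt t) ^ (N - 1)) := by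
            apply mul_lt_mul_of_pos_right hδlt
            exact mul_pos hv12 hGpos
    simp only
    linarith
  · intro hFT
    intro v1 hv1 v2 hv2 h12
    obtain ⟨L, _⟩ := aux_Pi hlohi hN K δ hδ0 r hFderiv hfcont hFmono vt T
      (hvmono T hT le_rfl) (hvtIcc T le_rfl).1 (hvtIcc (T - 1) (by omega)).2 hFT.le
      v1 v2 h12.le
    have hpos : 0 < δ ^ (T - 1) * ((v2 - v1) * F (vt T) ^ (N - 1)) :=
      mul_pos (pow_pos hδ0 _) (mul_pos (sub_pos.2 h12) (pow_pos hFT _))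
    simp only
    linarith
end

section
/- (Simplified indifference conditions.) For each 1 ≤ t < T, the indifference equation Π_t(v_t) = Π_{t+1}(v_t) holds if and only if G(v_t)·(v_t − r_t) − K·G(v_{t−1}) = δ·( G(v_t)·(v_t − K) − ∫_{v_{t+1}}^{v_t} x·(N−1)·F(x)^(N−2)·f(x) dx − r_{t+1}·G(v_{t+1}) ). For t = T, the equation Π_T(v_T) = 0 holds if and only if G(v_T)·(v_T − r_T) = K·G(v_{T−1}). -/
/-- Simplified indifference conditions: for `1 ≤ t < T`, `Π_t(v_t) = Π_{t+1}(v_t)` iff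
`G(v_t)(v_t − r_t) − K·G(v_{t−1}) = δ( G(v_t)(v_t − K) − ∫_{v_{t+1}}^{v_t} x dG(x)
− r_{t+1}·G(v_{t+1}) )`; and `Π_T(v_T) = 0` iff `G(v_T)(v_T − r_T) = K·G(v_{T−1})`. -/
theorem indifference_conditions
    (vlo vhi : ℝ) (hlohi : vlo < vhi)
    (N : ℕ) (hN : 2 ≤ N)
    (K : ℝ) (hK : 0 < K)
    (δ : ℝ) (hδ0 : 0 < δ) (hδ1 : δ < 1)
    (T : ℕ) (hT : 1 ≤ T)
    (r : ℕ → ℝ)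
    (F f : ℝ → ℝ)
    (hFderiv : ∀ x ∈ Set.Icc vlo vhi, HasDerivAt F (f x) x)
    (hfcont : ContinuousOn f (Set.Icc vlo vhi))
    (hFmono : MonotoneOn F (Set.Icc vlo vhi))
    (vt : ℕ → ℝ)
    (hv0 : vt 0 = vhi)
    (hvmono : ∀ t, 1 ≤ t → t ≤ T → vt t ≤ vt (t - 1))
    (hvT : vlo ≤ vt T) :
    (∀ t, 1 ≤ t → t < T →
      (PiPayoff δ N K r F f vt t (vt t) = PiPayoff δ N K r F f vt (t + 1) (vt t) ↔
        F (vt t) ^ (N - 1) * (vt t - r t) - K * F (vt (t - 1)) ^ (N - 1) =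
          δ * (F (vt t) ^ (N - 1) * (vt t - K)
            - (∫ x in (vt (t + 1))..(vt t), x * ((N : ℝ) - 1) * F x ^ (N - 2) * f x)
            - r (t + 1) * F (vt (t + 1)) ^ (N - 1)))) ∧
    (PiPayoff δ N K r F f vt T (vt T) = 0 ↔
      F (vt T) ^ (N - 1) * (vt T - r T) = K * F (vt (T - 1)) ^ (N - 1)) := by
  have hδne : δ ≠ 0 := ne_of_gt hδ0
  -- chain monotonicity
  have hchain : ∀ n, n ≤ T → ∀ s, s ≤ n → vt n ≤ vt s := by
    intro n
    induction n with
    | zero =>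
      intro _ s hs
      have : s = 0 := Nat.le_zero.mp hs
      rw [this]
    | succ m ih =>
      intro hn s hs
      rcases Nat.eq_or_lt_of_le hs with h | h
      · rw [h]
      · have h1 : vt (m+1) ≤ vt m := by
          have := hvmono (m+1) (by omega) hn
          simpa using this
        exact le_trans h1 (ih (by omega) s (by omega))
  have hmem : ∀ n, n ≤ T → vt n ∈ Set.Icc vlo vhi := by
    intro n hn
    constructor
    · exact le_trans hvT (hchain T le_rfl n hn)
    · calc vt n ≤ vt 0 := hchain n hn 0 (Nat.zero_le n)
        _ = vhi := hv0
  have hFcont : ContinuousOn F (Set.Icc vlo vhi) := fun x hx =>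
    (hFderiv x hx).continuousAt.continuousWithinAt
  have hgcont : ContinuousOn (fun x => ((N : ℝ) - 1) * F x ^ (N - 2) * f x)
      (Set.Icc vlo vhi) :=
    ((continuousOn_const.mul (hFcont.pow _)).mul hfcont)
  have hxgcont : ContinuousOn (fun x => x * (((N : ℝ) - 1) * F x ^ (N - 2) * f x))
      (Set.Icc vlo vhi) := continuousOn_id.mul hgcont
  -- FTC
  have key : ∀ a b : ℝ, a ∈ Set.Icc vlo vhi → b ∈ Set.Icc vlo vhi →
      (∫ x in a..b, ((N : ℝ) - 1) * F x ^ (N - 2) * f x)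
        = F b ^ (N - 1) - F a ^ (N - 1) := by
    intro a b ha hb
    have hsub : Set.uIcc a b ⊆ Set.Icc vlo vhi := Set.uIcc_subset_Icc ha hb
    refine intervalIntegral.integral_eq_sub_of_hasDerivAt (f := fun x => F x ^ (N - 1)) (fun x hx => ?_)
      ((hgcont.mono hsub).intervalIntegrable)
    have hd := (hFderiv x (hsub hx)).pow (N - 1)
    have hcast : ((N - 1 : ℕ) : ℝ) = (N : ℝ) - 1 := by
      push_cast [Nat.cast_sub (by omega : 1 ≤ N)]; ring
    have hidx : N - 1 - 1 = N - 2 := by omega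
    rw [hcast, hidx] at hd
    exact hd
  constructor
  · intro t ht1 ht2
    have htm : vt t ∈ Set.Icc vlo vhi := hmem t (by omega)
    have htp : vt (t + 1) ∈ Set.Icc vlo vhi := hmem (t + 1) (by omega)
    have hle1 : vt t ≤ vt (t - 1) := hvmono t ht1 (by omega)
    have hle2 : vt (t + 1) ≤ vt t := by
      have := hvmono (t + 1) (by omega) (by omega)
      simpa using this
    -- integrability on [vt (t+1), vt t]
    have hsub : Set.uIcc (vt (t+1)) (vt t) ⊆ Set.Icc vlo vhi :=
      Set.uIcc_subset_Icc htp htm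
    have hig : IntervalIntegrable (fun x => ((N : ℝ) - 1) * F x ^ (N - 2) * f x)
        MeasureTheory.volume (vt (t+1)) (vt t) := (hgcont.mono hsub).intervalIntegrable
    have higx : IntervalIntegrable (fun x => x * (((N : ℝ) - 1) * F x ^ (N - 2) * f x))
        MeasureTheory.volume (vt (t+1)) (vt t) := (hxgcont.mono hsub).intervalIntegrable
    -- split the integral
    have hsplit : (∫ x in (vt (t+1))..(vt t),
        (vt t - x) * ((N : ℝ) - 1) * F x ^ (N - 2) * f x)
        = vt t * (F (vt t) ^ (N - 1) - F (vt (t+1)) ^ (N - 1))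
          - ∫ x in (vt (t+1))..(vt t), x * ((N : ℝ) - 1) * F x ^ (N - 2) * f x := by
      have h1 : (∫ x in (vt (t+1))..(vt t),
          (vt t - x) * ((N : ℝ) - 1) * F x ^ (N - 2) * f x)
          = ∫ x in (vt (t+1))..(vt t),
            (vt t * (((N : ℝ) - 1) * F x ^ (N - 2) * f x)
              - x * (((N : ℝ) - 1) * F x ^ (N - 2) * f x)) := by
        apply intervalIntegral.integral_congr
        intro x _; ring
      rw [h1, intervalIntegral.integral_sub ((hig.const_mul _)) higx,
        intervalIntegral.integral_const_mul, key _ _ htp htm]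
      congr 1
      apply intervalIntegral.integral_congr
      intro x _; ring
    simp only [PiPayoff]
    have e1 : min (max (vt t) (vt t)) (vt (t - 1)) = vt t := by
      rw [max_self]; exact min_eq_left hle1
    have e2 : t + 1 - 1 = t := by omega
    have e3 : min (max (vt t) (vt (t + 1))) (vt t) = vt t := by
      rw [max_eq_left hle2, min_self]
    rw [e1, e2, e3, intervalIntegral.integral_same]
    have epow : δ ^ t = δ ^ (t - 1) * δ := by
      conv_lhs => rw [show t = (t - 1) + 1 by omega]
      rw [pow_succ]
    rw [epow, mul_assoc, mul_right_inj' (pow_ne_zero _ hδne)]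
    rw [hsplit]
    constructor <;> intro h <;> nlinarith [h]
  · have hle : vt T ≤ vt (T - 1) := hvmono T hT le_rfl
    simp only [PiPayoff]
    rw [show min (max (vt T) (vt T)) (vt (T - 1)) = vt T by
        rw [max_self]; exact min_eq_left hle,
      intervalIntegral.integral_same]
    rw [mul_eq_zero]
    have hpne : δ ^ (T - 1) ≠ 0 := pow_ne_zero _ hδne
    constructor
    · rintro (h | h)
      · exact absurd h hpne
      · nlinarith [h]
    · intro h
      right
      nlinarith [h]
end

section
/- (Reserve-price inversion.) Suppose G(v_t) > 0 for every 1 ≤ t ≤ T, and define, for each 1 ≤ t ≤ T, r_t = (1/G(v_t)) · ( Σ_{τ=t}^{T} (1−δ)·δ^(τ−t)·G(v_τ)·v_τ − K·G(v_{t−1}) + Σ_{τ=t}^{T−1} δ^(τ−t+1) · ∫_{v_{τ+1}}^{v_τ} x·(N−1)·F(x)^(N−2)·f(x) dx + δ^(T−t+1)·G(v_T)·v_T ). Then the simplified indifference conditions hold: for every 1 ≤ t < T, G(v_t)·(v_t − r_t) − K·G(v_{t−1}) = δ·( G(v_t)·(v_t − K) − ∫_{v_{t+1}}^{v_t} x·(N−1)·F(x)^(N−2)·f(x)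 dx − r_{t+1}·G(v_{t+1}) ), and G(v_T)·(v_T − r_T) = K·G(v_{T−1}). -/
lemma sum_Icc_split_bot {a b : ℕ} (h : a ≤ b) (g : ℕ → ℝ) :
    ∑ τ ∈ Finset.Icc a b, g τ = g a + ∑ τ ∈ Finset.Icc (a + 1) b, g τ := by
  rw [Finset.Icc_eq_cons_Ioc h, Finset.sum_cons, Finset.Icc_add_one_left_eq_Ioc]

/-- Reserve-price inversion: if the reserve prices are defined from the entry thresholds by
`r_t = (1/G(v_t)) · ( Σ_{τ=t}^{T} (1−δ)·δ^(τ−t)·G(v_τ)·v_τ − K·G(v_{t−1})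
+ Σ_{τ=t}^{T−1} δ^(τ−t+1)·∫_{v_{τ+1}}^{v_τ} x dG(x) + δ^(T−t+1)·G(v_T)·v_T )`,
where `G = F^(N−1)`, then the simplified indifference conditions hold. -/
theorem reserve_price_inversion
    (vlo vhi : ℝ) (hlohi : vlo < vhi)
    (N : ℕ) (hN : 2 ≤ N)
    (K : ℝ) (hK : 0 < K)
    (δ : ℝ) (hδ0 : 0 < δ) (hδ1 : δ < 1)
    (T : ℕ) (hT : 1 ≤ T)
    (F f : ℝ → ℝ)
    (hFderiv : ∀ x ∈ Set.Icc vlo vhi, HasDerivAt F (f x) x)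
    (hfcont : ContinuousOn f (Set.Icc vlo vhi))
    (hFmono : MonotoneOn F (Set.Icc vlo vhi))
    (vt : ℕ → ℝ)
    (hv0 : vt 0 = vhi)
    (hvmono : ∀ t, 1 ≤ t → t ≤ T → vt t ≤ vt (t - 1))
    (hvT : vlo ≤ vt T)
    (hGpos : ∀ t, 1 ≤ t → t ≤ T → 0 < F (vt t) ^ (N - 1))
    (r : ℕ → ℝ)
    (hr : ∀ t, 1 ≤ t → t ≤ T →
      r t = (1 / F (vt t) ^ (N - 1)) *
        ((∑ τ ∈ Finset.Icc t T, (1 - δ) * δ ^ (τ - t) * F (vt τ) ^ (N - 1) * vt τ)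
          - K * F (vt (t - 1)) ^ (N - 1)
          + (∑ τ ∈ Finset.Icc t (T - 1), δ ^ (τ - t + 1) *
              ∫ x in (vt (τ + 1))..(vt τ), x * ((N : ℝ) - 1) * F x ^ (N - 2) * f x)
          + δ ^ (T - t + 1) * F (vt T) ^ (N - 1) * vt T)) :
    (∀ t, 1 ≤ t → t < T →
      F (vt t) ^ (N - 1) * (vt t - r t) - K * F (vt (t - 1)) ^ (N - 1) =
        δ * (F (vt t) ^ (N - 1) * (vt t - K)
          - (∫ x in (vt (t + 1))..(vt t), x * ((N : ℝ) - 1) * F x ^ (N - 2) * f x)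
          - r (t + 1) * F (vt (t + 1)) ^ (N - 1))) ∧
    F (vt T) ^ (N - 1) * (vt T - r T) = K * F (vt (T - 1)) ^ (N - 1) := by
  set G : ℕ → ℝ := fun t => F (vt t) ^ (N - 1) with hGdef
  set I : ℕ → ℝ := fun τ =>
    ∫ x in (vt (τ + 1))..(vt τ), x * ((N : ℝ) - 1) * F x ^ (N - 2) * f x with hIdef
  have hS : ∀ t, 1 ≤ t → t ≤ T → r t * G t =
      (∑ τ ∈ Finset.Icc t T, (1 - δ) * δ ^ (τ - t) * G τ * vt τ)
        - K * G (t - 1)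
        + (∑ τ ∈ Finset.Icc t (T - 1), δ ^ (τ - t + 1) * I τ)
        + δ ^ (T - t + 1) * G T * vt T := by
    intro t h1 h2
    have hGt : G t ≠ 0 := ne_of_gt (hGpos t h1 h2)
    rw [hr t h1 h2]
    field_simp
    have hF := (hGpos t h1 h2).ne'
    simp only [hGdef, hIdef]
    rw [mul_div_assoc, div_self hF, mul_one]
    ring
  constructor
  · intro t h1 h2
    have h2' : t ≤ T := le_of_lt h2
    have hA : (∑ τ ∈ Finset.Icc t T, (1 - δ) * δ ^ (τ - t) * G τ * vt τ)
        = (1 - δ) * G t * vt t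
          + δ * ∑ τ ∈ Finset.Icc (t + 1) T, (1 - δ) * δ ^ (τ - (t + 1)) * G τ * vt τ := by
      rw [sum_Icc_split_bot h2' (fun τ => (1 - δ) * δ ^ (τ - t) * G τ * vt τ)]
      simp only [Nat.sub_self, pow_zero, mul_one, Finset.mul_sum]
      rw [add_right_inj]
      apply Finset.sum_congr rfl
      intro τ hτ
      have hτ' : t + 1 ≤ τ := (Finset.mem_Icc.mp hτ).1
      have : τ - t = (τ - (t + 1)) + 1 := by omega
      rw [this, pow_succ]; ring
    have hB : (∑ τ ∈ Finset.Icc t (T - 1), δ ^ (τ - t + 1) * I τ)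
        = δ * I t + δ * ∑ τ ∈ Finset.Icc (t + 1) (T - 1), δ ^ (τ - (t + 1) + 1) * I τ := by
      have ht1 : t ≤ T - 1 := by omega
      rw [sum_Icc_split_bot ht1 (fun τ => δ ^ (τ - t + 1) * I τ)]
      simp only [Nat.sub_self, zero_add, pow_one, Finset.mul_sum]
      rw [add_right_inj]
      apply Finset.sum_congr rfl
      intro τ hτ
      have hτ' : t + 1 ≤ τ := (Finset.mem_Icc.mp hτ).1
      have : τ - t + 1 = ((τ - (t + 1) + 1)) + 1 := by omega
      rw [this, pow_succ]; ring
    have hC : δ ^ (T - t + 1) = δ * δ ^ (T - (t + 1) + 1) := by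
      have : T - t + 1 = (T - (t + 1) + 1) + 1 := by omega
      rw [this, pow_succ]; ring
    have h1' := hS t h1 h2'
    rw [hA, hB, hC] at h1'
    have h2'' := hS (t + 1) (by omega) (by omega)
    simp only [Nat.add_sub_cancel] at h2''
    have hIg : (∫ x in (vt (t + 1))..(vt t), x * ((N : ℝ) - 1) * F x ^ (N - 2) * f x) = I t := rfl
    show G t * (vt t - r t) - K * G (t - 1)
        = δ * (G t * (vt t - K) - _ - r (t + 1) * G (t + 1))
    rw [hIg]
    linear_combination (-1 : ℝ) * h1' + δ * h2''
  · have h1' := hS T hT le_rfl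
    rw [Finset.Icc_self, Finset.sum_singleton, Finset.Icc_eq_empty (by omega : ¬ T ≤ T - 1),
      Finset.sum_empty, Nat.sub_self] at h1'
    simp only [pow_zero, pow_one] at h1'
    show G T * (vt T - r T) = K * G (T - 1)
    linear_combination (-1 : ℝ) * h1'
end

section
/- (Key derivative computation in the proof of revenue dominance.) Suppose v** ∈ (vlo, vhi) satisfies f(v**) > 0, F(v**) > 0, and the single-round revenue first-order condition F(v**)^(1−N)·K = v** − (1 − F(v**))/f(v**) − v_s. Then ∂R2/∂v1 (v**, v**) = δ·N·K·f(v**)·( 1 − F(v**)^(N−1) ). -/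
/-- Single-round expected seller revenue at entry threshold `w`. -/
noncomputable def R1 (vhi : ℝ) (N : ℕ) (K vs : ℝ) (F f : ℝ → ℝ) (w : ℝ) : ℝ :=
  (N : ℝ) * (1 - F w) * F w ^ (N - 1) * w
    + (N : ℝ) * ∫ x in w..vhi, x * (1 - F x) * ((N : ℝ) - 1) * F x ^ (N - 2) * f x
    - (N : ℝ) * (1 - F w) * K - vs * (1 - F w ^ N)

/-- Two-period expected seller revenue at thresholds `vhi ≥ v1 ≥ v2 ≥ vlo`. -/
noncomputable def R2 (vhi : ℝ) (N : ℕ) (K vs δ : ℝ) (F f : ℝ → ℝ) (v1 v2 : ℝ) : ℝ :=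
  δ ^ 2 * (N : ℝ) * (1 - F v2) * F v2 ^ (N - 1) * v2
    + (N : ℝ) * (∫ x in v1..vhi, x * (1 - F x) * ((N : ℝ) - 1) * F x ^ (N - 2) * f x)
    + (N : ℝ) * (1 - δ) * (1 - F v1) * F v1 ^ (N - 1) * v1
    - (N : ℝ) * (1 - F v1) * K - vs * (1 - F v1 ^ N)
    + δ * ((N : ℝ) * (∫ x in v2..v1, x * (1 - F x) * ((N : ℝ) - 1) * F x ^ (N - 2) * f x)
      + (N : ℝ) * (1 - δ) * (1 - F v2) * F v2 ^ (N - 1) * v2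
      - (N : ℝ) * F v1 ^ (N - 1) * (F v1 - F v2) * K
      - vs * (F v1 ^ N - F v2 ^ N))

/-- Key derivative computation in the proof of revenue dominance: if `v** ∈ (vlo, vhi)`
satisfies `f(v**) > 0`, `F(v**) > 0`, and the single-round revenue first-order condition
`F(v**)^(1−N)·K = v** − (1 − F(v**))/f(v**) − v_s`, then
`∂R2/∂v1 (v**, v**) = δ·N·K·f(v**)·(1 − F(v**)^(N−1))`. -/
theorem R2_partial_v1_at_diagonal
    (vlo vhi : ℝ) (hlohi : vlo < vhi)
    (N : ℕ) (hN : 2 ≤ N)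
    (K : ℝ) (hK : 0 < K)
    (vs : ℝ)
    (δ : ℝ) (hδ0 : 0 < δ) (hδ1 : δ < 1)
    (F f : ℝ → ℝ)
    (hFderiv : ∀ x ∈ Set.Icc vlo vhi, HasDerivAt F (f x) x)
    (hfcont : ContinuousOn f (Set.Icc vlo vhi))
    (hFmono : MonotoneOn F (Set.Icc vlo vhi))
    (hFhi : F vhi = 1)
    (vss : ℝ) (hvss : vss ∈ Set.Ioo vlo vhi)
    (hfpos : 0 < f vss) (hFpos : 0 < F vss)
    (hFOC : (F vss ^ (N - 1))⁻¹ * K = vss - (1 - F vss) / f vss - vs) :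
    HasDerivAt (fun v1 => R2 vhi N K vs δ F f v1 vss)
      (δ * (N : ℝ) * K * f vss * (1 - F vss ^ (N - 1))) vss := by
  obtain ⟨m, rfl⟩ : ∃ m, N = m + 2 := ⟨N - 2, by omega⟩
  have hvmem : vss ∈ Set.Icc vlo vhi := ⟨hvss.1.le, hvss.2.le⟩
  have hF : HasDerivAt F (f vss) vss := hFderiv vss hvmem
  set φ : ℝ → ℝ := fun x => x * (1 - F x) * (((m + 2 : ℕ) : ℝ) - 1) * F x ^ ((m + 2) - 2) * f x with hφ
  have hFc : ContinuousOn F (Set.Icc vlo vhi) := fun x hx =>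
    (hFderiv x hx).continuousAt.continuousWithinAt
  have hφc : ContinuousOn φ (Set.Icc vlo vhi) := by
    exact (((continuousOn_id.mul (continuousOn_const.sub hFc)).mul
      continuousOn_const).mul (hFc.pow _)).mul hfcont
  have hmemIcc : Set.Icc vlo vhi ∈ nhds vss := Icc_mem_nhds hvss.1 hvss.2
  have hφat : ContinuousAt φ vss := hφc.continuousAt hmemIcc
  have hmeas : StronglyMeasurableAtFilter φ (nhds vss) :=
    (hφc.mono Set.Ioo_subset_Icc_self).stronglyMeasurableAtFilter isOpen_Ioo vss hvss
  have huIcc1 : Set.uIcc vss vhi ⊆ Set.Icc vlo vhi := by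
    rw [Set.uIcc_of_le hvss.2.le]
    exact Set.Icc_subset_Icc hvss.1.le le_rfl
  have hint1 : IntervalIntegrable φ MeasureTheory.volume vss vhi :=
    (hφc.mono huIcc1).intervalIntegrable
  have hint2 : IntervalIntegrable φ MeasureTheory.volume vss vss := by simp
  have hI1 : HasDerivAt (fun u => ∫ x in u..vhi, φ x) (-φ vss) vss :=
    intervalIntegral.integral_hasDerivAt_left hint1 hmeas hφat
  have hI2 : HasDerivAt (fun u => ∫ x in vss..u, φ x) (φ vss) vss :=
    intervalIntegral.integral_hasDerivAt_right hint2 hmeas hφat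
  have h1 : HasDerivAt (fun v => 1 - F v) (0 - f vss) vss := (hasDerivAt_const vss (1:ℝ)).sub hF
  have hpow1 : HasDerivAt (fun v => F v ^ ((m + 2) - 1))
      ((((m + 2) - 1 : ℕ) : ℝ) * F vss ^ ((m + 2) - 1 - 1) * f vss) vss := hF.pow ((m + 2) - 1)
  have hpowN : HasDerivAt (fun v => F v ^ (m + 2)) (((m + 2 : ℕ) : ℝ) * F vss ^ ((m + 2) - 1) * f vss) vss := hF.pow (m + 2)
  have hB : HasDerivAt (fun v => ((m + 2 : ℕ) : ℝ) * ∫ x in v..vhi, φ x) (((m + 2 : ℕ) : ℝ) * -φ vss) vss :=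
    hI1.const_mul _
  have hC := (((h1.const_mul (((m + 2 : ℕ) : ℝ) * (1 - δ))).mul hpow1).mul (hasDerivAt_id vss))
  have hD4 := (h1.const_mul ((m + 2 : ℕ) : ℝ)).mul_const K
  have hE := ((hasDerivAt_const vss (1:ℝ)).sub hpowN).const_mul vs
  have hG1 : HasDerivAt (fun v => ((m + 2 : ℕ) : ℝ) * ∫ x in vss..v, φ x) (((m + 2 : ℕ) : ℝ) * φ vss) vss :=
    hI2.const_mul _
  have hG2 := hasDerivAt_const vss
    (((m + 2 : ℕ) : ℝ) * (1 - δ) * (1 - F vss) * F vss ^ ((m + 2) - 1) * vss)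
  have hG3 := ((hpow1.const_mul ((m + 2 : ℕ) : ℝ)).mul (hF.sub_const (F vss))).mul_const K
  have hG4 := (hpowN.sub_const (F vss ^ (m + 2))).const_mul vs
  have hG := (((hG1.add hG2).sub hG3).sub hG4).const_mul δ
  have hA := hasDerivAt_const vss
    (δ ^ 2 * ((m + 2 : ℕ) : ℝ) * (1 - F vss) * F vss ^ ((m + 2) - 1) * vss)
  have H := (((((hA.add hB).add hC).sub hD4).sub hE).add hG)
  simp only [R2]
  convert H using 1
  · rfl
  · rfl
  · rfl
  simp only [hφ]
  have h2 : (m + 2 - 1 : ℕ) = m + 1 := rfl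
  have h3 : (m + 2 - 2 : ℕ) = m := rfl
  have h4 : (m + 2 - 1 - 1 : ℕ) = m := rfl
  simp only [h2, h3, h4, id_eq, Pi.mul_apply]
  field_simp at hFOC
  push_cast at hFOC ⊢
  linear_combination (((m:ℝ)+2) * (δ-1)) * hFOC
end

section
/- (Gradient of the T-period total surplus.) For thresholds with vhi > v_1 > … > v_T > vlo, the partial derivatives of TS are: for every 1 ≤ t < T, ∂TS/∂v_t = N·δ^(t−1)·f(v_t)·( F(v_{t−1})^(N−1)·K − δ·K·F(v_t)^(N−2)·( N·F(v_t) − (N−1)·F(v_{t+1}) ) − (1 − δ)·(v_t − v_s)·F(v_t)^(N−1) ), and ∂TS/∂v_T = N·δ^(T−1)·f(v_T)·( F(v_{T−1})^(N−1)·K − (v_T − v_s)·F(v_T)^(N−1) ), where v_0 = vhi. -/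
/-- T-period expected total surplus at thresholds `u : ℕ → ℝ` (with `u 0 = vhi`):
`TS(u) = Σ_{t=1}^T δ^(t−1)·( ∫_{u_t}^{u_{t−1}} (x − v_s)·N·F(x)^(N−1)·f(x) dx
− N·F(u_{t−1})^(N−1)·(F(u_{t−1}) − F(u_t))·K ) + v_s`. -/
noncomputable def TS (N T : ℕ) (K vs δ : ℝ) (F f : ℝ → ℝ) (u : ℕ → ℝ) : ℝ :=
  (∑ t ∈ Finset.Icc 1 T, δ ^ (t - 1) *
    ((∫ x in (u t)..(u (t - 1)), (x - vs) * (N : ℝ) * F x ^ (N - 1) * f x)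
      - (N : ℝ) * F (u (t - 1)) ^ (N - 1) * (F (u (t - 1)) - F (u t)) * K)) + vs

/-- Gradient of the T-period total surplus: for strictly interior decreasing thresholds,
for `1 ≤ t < T`,
`∂TS/∂v_t = N·δ^(t−1)·f(v_t)·( F(v_{t−1})^(N−1)·K
  − δ·K·F(v_t)^(N−2)·(N·F(v_t) − (N−1)·F(v_{t+1})) − (1−δ)·(v_t − v_s)·F(v_t)^(N−1) )`,
and `∂TS/∂v_T = N·δ^(T−1)·f(v_T)·( F(v_{T−1})^(N−1)·K − (v_T − v_s)·F(v_T)^(N−1) )`. -/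
theorem TS_gradient
    (vlo vhi : ℝ) (hlohi : vlo < vhi)
    (N T : ℕ) (hN : 2 ≤ N) (hT : 1 ≤ T)
    (K : ℝ) (hK : 0 < K)
    (vs : ℝ)
    (δ : ℝ) (hδ0 : 0 < δ) (hδ1 : δ < 1)
    (F f : ℝ → ℝ)
    (hFderiv : ∀ x ∈ Set.Icc vlo vhi, HasDerivAt F (f x) x)
    (hfcont : ContinuousOn f (Set.Icc vlo vhi))
    (hFmono : MonotoneOn F (Set.Icc vlo vhi))
    (v : ℕ → ℝ)
    (hv0 : v 0 = vhi)
    (hv1 : v 1 < vhi)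
    (hvdec : ∀ t, 1 ≤ t → t < T → v (t + 1) < v t)
    (hvT : vlo < v T) :
    (∀ t, 1 ≤ t → t < T →
      HasDerivAt (fun w => TS N T K vs δ F f (Function.update v t w))
        ((N : ℝ) * δ ^ (t - 1) * f (v t) *
          (F (v (t - 1)) ^ (N - 1) * K
            - δ * K * F (v t) ^ (N - 2) * ((N : ℝ) * F (v t) - ((N : ℝ) - 1) * F (v (t + 1)))
            - (1 - δ) * (v t - vs) * F (v t) ^ (N - 1)))
        (v t)) ∧
    HasDerivAt (fun w => TS N T K vs δ F f (Function.update v T w))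
      ((N : ℝ) * δ ^ (T - 1) * f (v T) *
        (F (v (T - 1)) ^ (N - 1) * K - (v T - vs) * F (v T) ^ (N - 1)))
      (v T) := by
  -- abbreviation for the integrand
  set φ : ℝ → ℝ := fun x => (x - vs) * (N : ℝ) * F x ^ (N - 1) * f x with hφ
  -- monotonicity of thresholds
  have hanti : ∀ s t : ℕ, s ≤ t → t ≤ T → v t ≤ v s := by
    intro s t hst htT
    induction t with
    | zero => obtain rfl : s = 0 := Nat.le_zero.mp hst; exact le_rfl
    | succ n ih =>
      rcases Nat.eq_or_lt_of_le hst with h | h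
      · rw [h]
      · have h1 : v (n + 1) ≤ v n := by
          rcases Nat.eq_zero_or_pos n with rfl | hn
        -- n = 0 : v 1 ≤ v 0 = vhi
          · rw [hv0]; exact le_of_lt hv1
          · exact le_of_lt (hvdec n hn (by omega))
        exact le_trans h1 (ih (by omega) (by omega))
  have hIoo : ∀ t : ℕ, 1 ≤ t → t ≤ T → v t ∈ Set.Ioo vlo vhi := by
    intro t h1 h2
    constructor
    · exact lt_of_lt_of_le hvT (hanti t T h2 le_rfl)
    · exact lt_of_le_of_lt (hanti 1 t h1 h2) hv1
  have hmemIcc : ∀ t : ℕ, t ≤ T → v t ∈ Set.Icc vlo vhi := by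
    intro t ht
    rcases Nat.eq_zero_or_pos t with rfl | h1
    · rw [hv0]; exact ⟨le_of_lt hlohi, le_rfl⟩
    · exact Set.mem_Icc_of_Ioo (hIoo t h1 ht)
  -- continuity of F and φ
  have hFcont : ContinuousOn F (Set.Icc vlo vhi) := fun x hx =>
    (hFderiv x hx).continuousAt.continuousWithinAt
  have hφcont : ContinuousOn φ (Set.Icc vlo vhi) := by
    apply ContinuousOn.mul _ hfcont
    apply ContinuousOn.mul _ (hFcont.pow _)
    exact (continuousOn_id.sub continuousOn_const).mul continuousOn_const
  have hφint : ∀ a b : ℝ, a ∈ Set.Icc vlo vhi → b ∈ Set.Icc vlo vhi →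
      IntervalIntegrable φ MeasureTheory.volume a b := by
    intro a b ha hb
    apply (hφcont.mono _).intervalIntegrable
    rw [← Set.uIcc_of_le hlohi.le]
    exact Set.uIcc_subset_uIcc (by rw [Set.uIcc_of_le hlohi.le]; exact ha)
      (by rw [Set.uIcc_of_le hlohi.le]; exact hb)
  have hφmeas : ∀ t : ℕ, 1 ≤ t → t ≤ T →
      StronglyMeasurableAtFilter φ (nhds (v t)) MeasureTheory.volume := by
    intro t h1 h2
    exact (hφcont.mono Set.Ioo_subset_Icc_self).stronglyMeasurableAtFilter isOpen_Ioo
      (v t) (hIoo t h1 h2)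
  have hφat : ∀ t : ℕ, 1 ≤ t → t ≤ T → ContinuousAt φ (v t) := by
    intro t h1 h2
    exact hφcont.continuousAt (Icc_mem_nhds (hIoo t h1 h2).1 (hIoo t h1 h2).2)
  -- generic derivative statement
  have main : ∀ t : ℕ, 1 ≤ t → t ≤ T →
      HasDerivAt (fun w => TS N T K vs δ F f (Function.update v t w))
        (δ ^ (t - 1) * (-φ (v t) - ((N : ℝ) * F (v (t - 1)) ^ (N - 1) * (0 - f (v t)) * K))
          + (if t < T then
              δ ^ t * (φ (v t) - ((N : ℝ) * (↑(N - 1) * F (v t) ^ (N - 1 - 1) * f (v t)) *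
                (F (v t) - F (v (t + 1))) * K
                + (N : ℝ) * F (v t) ^ (N - 1) * (f (v t)) * K)) else 0)) (v t) := by
    intro t h1 h2
    have hFd : HasDerivAt F (f (v t)) (v t) := hFderiv _ (hmemIcc t h2)
    have htm : v (t - 1) ∈ Set.Icc vlo vhi := hmemIcc _ (by omega)
    have htt : v t ∈ Set.Icc vlo vhi := hmemIcc _ h2
    have hsum : HasDerivAt (fun w => ∑ τ ∈ Finset.Icc 1 T, δ ^ (τ - 1) *
        ((∫ x in (Function.update v t w τ)..(Function.update v t w (τ - 1)), φ x)
          - (N : ℝ) * F (Function.update v t w (τ - 1)) ^ (N - 1) *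
            (F (Function.update v t w (τ - 1)) - F (Function.update v t w τ)) * K))
        (∑ τ ∈ Finset.Icc 1 T,
          ((if τ = t then
              δ ^ (t - 1) * (-φ (v t) - ((N : ℝ) * F (v (t - 1)) ^ (N - 1) * (0 - f (v t)) * K))
            else 0)
          + (if τ = t + 1 then
              (if t < T then
                δ ^ t * (φ (v t) - ((N : ℝ) * (↑(N - 1) * F (v t) ^ (N - 1 - 1) * f (v t)) *
                  (F (v t) - F (v (t + 1))) * K
                  + (N : ℝ) * F (v t) ^ (N - 1) * (f (v t)) * K)) else 0)
            else 0))) (v t) := by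
      apply HasDerivAt.fun_sum
      intro τ hτ
      simp only [Finset.mem_Icc] at hτ
      rcases eq_or_ne τ t with rfl | hne
      · -- the term with index t
        rw [if_pos rfl, if_neg (by omega : τ ≠ τ + 1), add_zero]
        have e1 : ∀ w : ℝ, Function.update v τ w τ = w := fun w => Function.update_self τ w v
        have e2 : ∀ w : ℝ, Function.update v τ w (τ - 1) = v (τ - 1) := fun w =>
          Function.update_of_ne (by omega) w v
        simp only [e1, e2]
        exact ((intervalIntegral.integral_hasDerivAt_left
            (hφint _ _ htt htm) (hφmeas τ h1 h2) (hφat τ h1 h2)).sub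
          ((((hasDerivAt_const (v τ) (F (v (τ - 1)))).sub hFd).const_mul
            ((N : ℝ) * F (v (τ - 1)) ^ (N - 1))).mul_const K)).const_mul _
      rcases eq_or_ne τ (t + 1) with rfl | hne2
      · -- the term with index t + 1
        have htT : t < T := by omega
        rw [if_neg hne, if_pos rfl, if_pos htT, zero_add]
        have e1 : ∀ w : ℝ, Function.update v t w (t + 1) = v (t + 1) := fun w =>
          Function.update_of_ne (by omega) w v
        have e2 : ∀ w : ℝ, Function.update v t w (t + 1 - 1) = w := fun w =>
          Function.update_self t w v
        have e3 : t + 1 - 1 = t := rfl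
        simp only [e3, e1, e2, Function.update_self]
        apply HasDerivAt.const_mul
        apply HasDerivAt.sub
        · exact intervalIntegral.integral_hasDerivAt_right
            (hφint _ _ (hmemIcc _ (by omega)) htt) (hφmeas t h1 h2) (hφat t h1 h2)
        · have hp := (((hFd.fun_pow (N - 1)).const_mul (N : ℝ)).fun_mul
            (hFd.sub_const (F (v (t + 1))))).mul_const K
          exact hp.congr_deriv (by ring)
      · -- constant terms
        rw [if_neg hne, if_neg hne2, add_zero]
        have e1 : ∀ w : ℝ, Function.update v t w τ = v τ := fun w =>
          Function.update_of_ne hne w v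
        have e2 : ∀ w : ℝ, Function.update v t w (τ - 1) = v (τ - 1) := fun w =>
          Function.update_of_ne (by omega) w v
        simp only [e1, e2]
        exact hasDerivAt_const _ _
    have h2' := hsum.add_const vs
    rw [Finset.sum_add_distrib, Finset.sum_ite_eq', Finset.sum_ite_eq',
      if_pos (Finset.mem_Icc.mpr ⟨h1, h2⟩)] at h2'
    have hfun : (fun w => TS N T K vs δ F f (Function.update v t w))
        = (fun w => (∑ τ ∈ Finset.Icc 1 T, δ ^ (τ - 1) *
          ((∫ x in (Function.update v t w τ)..(Function.update v t w (τ - 1)), φ x)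
            - (N : ℝ) * F (Function.update v t w (τ - 1)) ^ (N - 1) *
              (F (Function.update v t w (τ - 1)) - F (Function.update v t w τ)) * K)) + vs) := rfl
    rw [hfun]
    by_cases hlt : t < T
    · rwa [if_pos (Finset.mem_Icc.mpr ⟨by omega, by omega⟩)] at h2'
    · rw [if_neg hlt]
      rwa [if_neg (by simp only [Finset.mem_Icc]; omega)] at h2'
  constructor
  · intro t h1 h2
    have hmain := main t h1 (le_of_lt h2)
    rw [if_pos h2] at hmain
    convert hmain using 1
    obtain ⟨s, rfl⟩ : ∃ s, t = s + 1 := ⟨t - 1, by omega⟩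
    obtain ⟨m, rfl⟩ : ∃ m, N = m + 2 := ⟨N - 2, by omega⟩
    simp only [hφ, Nat.add_sub_cancel, pow_succ]
    push_cast
    ring
  · have hmain := main T hT le_rfl
    rw [if_neg (lt_irrefl T), add_zero] at hmain
    convert hmain using 1
    obtain ⟨s, rfl⟩ : ∃ s, T = s + 1 := ⟨T - 1, by omega⟩
    obtain ⟨m, rfl⟩ : ∃ m, N = m + 2 := ⟨N - 2, by omega⟩
    simp only [hφ, Nat.add_sub_cancel]
    push_cast
    ring
end

section
/- (Theorem 3, Efficient Recurring Auction: first-order conditions.) Suppose v* = (v_1*, …, v_T*) with vhi > v_1* > … > v_T* > vlo is a local maximizer of TS among threshold vectors, and f(v_t*) > 0 and F(v_t*) > 0 for every 1 ≤ t ≤ T. Then, with v_0* = vhi, for every 1 ≤ t < T: ( (F(v_{t−1}*)/F(v_t*))^(N−1) − δ·( N·F(v_t*) − (N−1)·F(v_{t+1}*) )/F(v_t*) )·K − (1 − δ)·(v_t* − v_s) = 0, and for t = T: (F(v_{T−1}*)/F(v_T*))^(N−1)·K − (v_T* − v_s) = 0. -/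
open Topology MeasureTheory Filter


set_option maxHeartbeats 1000000 in
/-- Theorem 3 (Efficient Recurring Auction, first-order conditions): if a strictly interior
decreasing threshold vector `v*` is a local maximizer of `TS` among threshold vectors, and
`f(v_t*) > 0`, `F(v_t*) > 0` for all `1 ≤ t ≤ T`, then for `1 ≤ t < T`:
`( (F(v_{t−1}*)/F(v_t*))^(N−1) − δ·(N·F(v_t*) − (N−1)·F(v_{t+1}*))/F(v_t*) )·K
  − (1−δ)·(v_t* − v_s) = 0`, and `(F(v_{T−1}*)/F(v_T*))^(N−1)·K − (v_T* − v_s) = 0`. -/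
theorem efficient_recurring_auction_FOC
    (vlo vhi : ℝ) (hlohi : vlo < vhi)
    (N T : ℕ) (hN : 2 ≤ N) (hT : 1 ≤ T)
    (K : ℝ) (hK : 0 < K)
    (vs : ℝ)
    (δ : ℝ) (hδ0 : 0 < δ) (hδ1 : δ < 1)
    (F f : ℝ → ℝ)
    (hFderiv : ∀ x ∈ Set.Icc vlo vhi, HasDerivAt F (f x) x)
    (hfcont : ContinuousOn f (Set.Icc vlo vhi))
    (hFmono : MonotoneOn F (Set.Icc vlo vhi))
    (v : ℕ → ℝ)
    (hv0 : v 0 = vhi)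
    (hv1 : v 1 < vhi)
    (hvdec : ∀ t, 1 ≤ t → t < T → v (t + 1) < v t)
    (hvT : vlo < v T)
    (hfpos : ∀ t, 1 ≤ t → t ≤ T → 0 < f (v t))
    (hFpos : ∀ t, 1 ≤ t → t ≤ T → 0 < F (v t))
    (hmax : IsLocalMaxOn (TS N T K vs δ F f)
      {u : ℕ → ℝ | u 0 = vhi ∧ (∀ t, 1 ≤ t → t ≤ T → u t ≤ u (t - 1)) ∧ vlo ≤ u T} v) :
    (∀ t, 1 ≤ t → t < T →
      ((F (v (t - 1)) / F (v t)) ^ (N - 1)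
          - δ * ((N : ℝ) * F (v t) - ((N : ℝ) - 1) * F (v (t + 1))) / F (v t)) * K
        - (1 - δ) * (v t - vs) = 0) ∧
    (F (v (T - 1)) / F (v T)) ^ (N - 1) * K - (v T - vs) = 0 := by
  obtain ⟨m, rfl⟩ : ∃ m, N = m + 2 := ⟨N - 2, by omega⟩
  -- basic monotonicity facts
  have hstep : ∀ s, 1 ≤ s → s ≤ T → v s ≤ v (s - 1) := by
    intro s h1 h2
    rcases eq_or_lt_of_le h1 with h | h
    · rw [← h]; simpa [hv0] using hv1.le
    · have hd := hvdec (s - 1) (by omega) (by omega)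
      rw [show s - 1 + 1 = s by omega] at hd
      exact hd.le
  have hmono : ∀ s t', 1 ≤ s → s ≤ t' → t' ≤ T → v t' ≤ v s := by
    intro s t' h1 h2 h3
    induction t', h2 using Nat.le_induction with
    | base => exact le_refl _
    | succ n hn ih =>
      have h4 : v (n + 1) ≤ v n := hstep (n + 1) (by omega) h3
      exact h4.trans (ih (by omega))
  have hvIoo : ∀ s, 1 ≤ s → s ≤ T → v s ∈ Set.Ioo vlo vhi := by
    intro s h1 h2
    exact ⟨lt_of_lt_of_le hvT (hmono s T h1 h2 le_rfl),
      lt_of_le_of_lt (hmono 1 s le_rfl h1 h2) hv1⟩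
  have hvIcc : ∀ s, s ≤ T → v s ∈ Set.Icc vlo vhi := by
    intro s h2
    rcases Nat.eq_zero_or_pos s with h | h
    · rw [h, hv0]; exact ⟨hlohi.le, le_rfl⟩
    · exact Set.mem_Icc_of_Ioo (hvIoo s h h2)
  have hFcont : ContinuousOn F (Set.Icc vlo vhi) :=
    fun x hx => (hFderiv x hx).continuousAt.continuousWithinAt
  have hcont_h : ContinuousOn (fun x => (x - vs) * ((m + 2 : ℕ) : ℝ) * F x ^ (m + 2 - 1) * f x)
      (Set.Icc vlo vhi) := by
    exact ((((continuous_id.sub continuous_const).mul continuous_const).continuousOn).mul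
      (hFcont.pow _)).mul hfcont
  -- key: derivative of TS in each coordinate vanishes
  have key : ∀ t, 1 ≤ t → t ≤ T →
      δ ^ (t - 1) * (((m : ℝ) + 2) * f (v t)) *
          (F (v (t - 1)) ^ (m + 1) * K - (v t - vs) * F (v t) ^ (m + 1))
        + (if t < T then δ ^ t * (((m : ℝ) + 2) * f (v t)) *
            ((v t - vs) * F (v t) ^ (m + 1)
              - (((m : ℝ) + 1) * F (v t) ^ m * (F (v t) - F (v (t + 1))) + F (v t) ^ (m + 1)) * K)
          else 0) = 0 := by
    intro t ht1 htT
    have hpI : v t ∈ Set.Ioo vlo vhi := hvIoo t ht1 htT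
    have hFt : HasDerivAt F (f (v t)) (v t) := hFderiv _ (Set.mem_Icc_of_Ioo hpI)
    have hchA : ContinuousAt (fun x => (x - vs) * ((m + 2 : ℕ) : ℝ) * F x ^ (m + 2 - 1) * f x)
        (v t) := hcont_h.continuousAt (Icc_mem_nhds hpI.1 hpI.2)
    have hmeasA : StronglyMeasurableAtFilter
        (fun x => (x - vs) * ((m + 2 : ℕ) : ℝ) * F x ^ (m + 2 - 1) * f x) (𝓝 (v t)) :=
      (hcont_h.mono Set.Ioo_subset_Icc_self).stronglyMeasurableAtFilter isOpen_Ioo (v t) hpI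
    have hint1 : IntervalIntegrable (fun x => (x - vs) * ((m + 2 : ℕ) : ℝ) * F x ^ (m + 2 - 1) * f x)
        MeasureTheory.volume (v t) (v (t - 1)) :=
      (hcont_h.mono (Set.uIcc_subset_Icc (hvIcc t htT) (hvIcc (t - 1) (by omega)))).intervalIntegrable
    -- perturbation interval
    set lb : ℝ := if t < T then v (t + 1) else vlo with hlb
    have hlbt : lb < v t := by
      by_cases hc : t < T
      · rw [hlb, if_pos hc]; exact hvdec t ht1 hc
      · rw [hlb, if_neg hc]
        have hteq : t = T := by omega
        rw [hteq]; exact hvT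
    have hub : v t < v (t - 1) := by
      rcases eq_or_lt_of_le ht1 with h | h
      · rw [← h]; simpa [hv0] using hv1
      · have hd := hvdec (t - 1) (by omega) (by omega)
        rwa [show t - 1 + 1 = t by omega] at hd
    have hmaps : Set.MapsTo (fun y => Function.update v t y) (Set.Ioo lb (v (t - 1)))
        {u : ℕ → ℝ | u 0 = vhi ∧ (∀ t, 1 ≤ t → t ≤ T → u t ≤ u (t - 1)) ∧ vlo ≤ u T} := by
      intro y hy
      beta_reduce
      refine ⟨?_, ?_, ?_⟩
      · rw [Function.update_of_ne (by omega : (0 : ℕ) ≠ t)]; exact hv0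
      · intro s hs1 hsT
        by_cases hst : s = t
        · subst hst
          rw [Function.update_self, Function.update_of_ne (by omega : s - 1 ≠ s)]
          exact hy.2.le
        · by_cases hst1 : s = t + 1
          · subst hst1
            rw [Function.update_of_ne (by omega : t + 1 ≠ t),
              show t + 1 - 1 = t from rfl, Function.update_self]
            have hlb' : lb = v (t + 1) := by rw [hlb, if_pos (by omega : t < T)]
            exact le_of_lt (hlb' ▸ hy.1)
          · rw [Function.update_of_ne hst, Function.update_of_ne (by omega : s - 1 ≠ t)]
            exact hstep s hs1 hsT
      · by_cases htT' : t = T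
        · subst htT'
          rw [Function.update_self]
          have hlb' : lb = vlo := by rw [hlb, if_neg (lt_irrefl t)]
          exact le_of_lt (hlb' ▸ hy.1)
        · rw [Function.update_of_ne (fun hc => htT' hc.symm)]
          exact le_of_lt (lt_of_lt_of_le hvT le_rfl)
    have hmem : v t ∈ Set.Ioo lb (v (t - 1)) := ⟨hlbt, hub⟩
    -- local maximality of the one-dimensional slice
    have hloc : IsLocalMax (fun y => TS (m + 2) T K vs δ F f (Function.update v t y)) (v t) := by
      have hcontφ : ContinuousWithinAt (fun y => Function.update v t y)
          (Set.Ioo lb (v (t - 1))) (v t) := by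
        apply Continuous.continuousWithinAt
        apply continuous_pi
        intro i
        by_cases hit : i = t
        · subst hit; simpa [Function.update_self] using continuous_id'
        · simpa [Function.update_of_ne hit] using (continuous_const : Continuous fun _ : ℝ => v i)
      have htend := hcontφ.tendsto_nhdsWithin hmaps
      rw [Function.update_eq_self] at htend
      have hev := htend.eventually hmax
      rw [isOpen_Ioo.nhdsWithin_eq hmem] at hev
      refine hev.mono fun y hy => ?_
      simpa [Function.update_eq_self] using hy
    -- the one-dimensional derivative
    have HA : HasDerivAt
        (fun y => δ ^ (t - 1) *
          ((∫ x in y..(v (t - 1)), (x - vs) * ((m + 2 : ℕ) : ℝ) * F x ^ (m + 2 - 1) * f x)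
            - ((m + 2 : ℕ) : ℝ) * F (v (t - 1)) ^ (m + 2 - 1) * (F (v (t - 1)) - F y) * K))
        (δ ^ (t - 1) *
          (-((v t - vs) * ((m + 2 : ℕ) : ℝ) * F (v t) ^ (m + 2 - 1) * f (v t))
            - ((m + 2 : ℕ) : ℝ) * F (v (t - 1)) ^ (m + 2 - 1) * (0 - f (v t)) * K)) (v t) := by
      exact HasDerivAt.const_mul _ (HasDerivAt.sub
        (intervalIntegral.integral_hasDerivAt_left hint1 hmeasA hchA)
        (HasDerivAt.mul_const
          (HasDerivAt.const_mul _ ((hasDerivAt_const (v t) (F (v (t - 1)))).sub hFt)) K))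
    have HD : HasDerivAt (fun y => TS (m + 2) T K vs δ F f (Function.update v t y))
        (∑ s ∈ Finset.Icc 1 T,
          ((if s = t then δ ^ (t - 1) *
              (-((v t - vs) * ((m + 2 : ℕ) : ℝ) * F (v t) ^ (m + 2 - 1) * f (v t))
                - ((m + 2 : ℕ) : ℝ) * F (v (t - 1)) ^ (m + 2 - 1) * (0 - f (v t)) * K) else 0)
          + (if s = t + 1 then δ ^ (t + 1 - 1) *
              ((v t - vs) * ((m + 2 : ℕ) : ℝ) * F (v t) ^ (m + 2 - 1) * f (v t)
                - (((m + 2 : ℕ) : ℝ) * (((m + 2 - 1 : ℕ) : ℝ) * F (v t) ^ (m + 2 - 1 - 1) * f (v t))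
                    * (F (v t) - F (v (t + 1)))
                  + ((m + 2 : ℕ) : ℝ) * F (v t) ^ (m + 2 - 1) * f (v t)) * K) else 0)))
        (v t) := by
      simp only [TS]
      apply HasDerivAt.add_const
      apply HasDerivAt.fun_sum
      intro s hs
      rw [Finset.mem_Icc] at hs
      by_cases hst : s = t
      · subst hst
        rw [if_pos rfl, if_neg (by omega : ¬ s = s + 1), add_zero]
        simp only [Function.update_self, Function.update_of_ne (show s - 1 ≠ s by omega)]
        exact HA
      · by_cases hst1 : s = t + 1
        · subst hst1
          rw [if_neg hst, if_pos rfl, zero_add]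
          have hup1 : ∀ z : ℝ, Function.update v t z (t + 1 - 1) = z :=
            fun z => Function.update_self t z v
          simp only [hup1, Function.update_self, Function.update_of_ne (show t + 1 ≠ t by omega),
            show t + 1 - 1 = t from rfl]
          have hint2 : IntervalIntegrable
              (fun x => (x - vs) * ((m + 2 : ℕ) : ℝ) * F x ^ (m + 2 - 1) * f x)
              MeasureTheory.volume (v (t + 1)) (v t) :=
            (hcont_h.mono (Set.uIcc_subset_Icc (hvIcc (t + 1) hs.2) (hvIcc t htT))).intervalIntegrable
          exact HasDerivAt.const_mul _ (HasDerivAt.sub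
            (intervalIntegral.integral_hasDerivAt_right hint2 hmeasA hchA)
            (HasDerivAt.mul_const
              (((hFt.pow (m + 2 - 1)).const_mul _).mul (hFt.sub_const (F (v (t + 1))))) K))
        · rw [if_neg hst, if_neg hst1, add_zero]
          simp only [Function.update_of_ne hst,
            Function.update_of_ne (show s - 1 ≠ t by omega)]
          exact hasDerivAt_const _ _
    have hD0 := hloc.hasDerivAt_eq_zero HD
    rw [Finset.sum_add_distrib, Finset.sum_ite_eq', Finset.sum_ite_eq',
      if_pos (by rw [Finset.mem_Icc]; omega : t ∈ Finset.Icc 1 T)] at hD0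
    by_cases hcase : t < T
    · rw [if_pos (by rw [Finset.mem_Icc]; omega : t + 1 ∈ Finset.Icc 1 T)] at hD0
      rw [if_pos hcase]
      simp only [show m + 2 - 1 = m + 1 from rfl, show m + 2 - 1 - 1 = m from rfl,
        show t + 1 - 1 = t from rfl] at hD0
      push_cast at hD0 ⊢
      linear_combination hD0
    · rw [if_neg (by rw [Finset.mem_Icc]; push_neg; intro _; omega : ¬ t + 1 ∈ Finset.Icc 1 T),
        add_zero] at hD0
      rw [if_neg hcase, add_zero]
      simp only [show m + 2 - 1 = m + 1 from rfl] at hD0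
      push_cast at hD0 ⊢
      linear_combination hD0
  -- now derive the stated first-order conditions
  constructor
  · intro t ht1 htT
    have kt := key t ht1 htT.le
    rw [if_pos htT] at kt
    have hδpow : δ ^ t = δ ^ (t - 1) * δ := by
      conv_lhs => rw [show t = (t - 1) + 1 by omega]
      rw [pow_succ]
    rw [hδpow] at kt
    have hfpos' := hfpos t ht1 htT.le
    have h1 : δ ^ (t - 1) * (((m : ℝ) + 2) * f (v t)) ≠ 0 := by positivity
    have hE : (F (v (t - 1)) ^ (m + 1) * K - (v t - vs) * F (v t) ^ (m + 1))
        + δ * ((v t - vs) * F (v t) ^ (m + 1)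
          - (((m : ℝ) + 1) * F (v t) ^ m * (F (v t) - F (v (t + 1))) + F (v t) ^ (m + 1)) * K)
        = 0 := by
      have h2 : δ ^ (t - 1) * (((m : ℝ) + 2) * f (v t)) *
          ((F (v (t - 1)) ^ (m + 1) * K - (v t - vs) * F (v t) ^ (m + 1))
            + δ * ((v t - vs) * F (v t) ^ (m + 1)
              - (((m : ℝ) + 1) * F (v t) ^ m * (F (v t) - F (v (t + 1))) + F (v t) ^ (m + 1)) * K))
          = 0 := by linear_combination kt
      exact (mul_eq_zero.mp h2).resolve_left h1
    have hFt : F (v t) ≠ 0 := (hFpos t ht1 htT.le).ne'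
    show ((F (v (t - 1)) / F (v t)) ^ (m + 2 - 1)
          - δ * (((m + 2 : ℕ) : ℝ) * F (v t) - (((m + 2 : ℕ) : ℝ) - 1) * F (v (t + 1))) / F (v t)) * K
        - (1 - δ) * (v t - vs) = 0
    simp only [show m + 2 - 1 = m + 1 from rfl]
    push_cast
    have hgoal : ((F (v (t - 1)) / F (v t)) ^ (m + 1)
          - δ * (((m : ℝ) + 2) * F (v t) - ((m : ℝ) + 2 - 1) * F (v (t + 1))) / F (v t)) * K
        - (1 - δ) * (v t - vs)
        = ((F (v (t - 1)) ^ (m + 1) * K - (v t - vs) * F (v t) ^ (m + 1))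
            + δ * ((v t - vs) * F (v t) ^ (m + 1)
              - (((m : ℝ) + 1) * F (v t) ^ m * (F (v t) - F (v (t + 1))) + F (v t) ^ (m + 1)) * K))
          / F (v t) ^ (m + 1) := by
      rw [div_pow]
      field_simp
      ring
    rw [hgoal, hE, zero_div]
  · have kT := key T hT le_rfl
    rw [if_neg (lt_irrefl T), add_zero] at kT
    have hfpos' := hfpos T hT le_rfl
    have h1 : δ ^ (T - 1) * (((m : ℝ) + 2) * f (v T)) ≠ 0 := by positivity
    have hE : F (v (T - 1)) ^ (m + 1) * K - (v T - vs) * F (v T) ^ (m + 1) = 0 :=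
      (mul_eq_zero.mp kT).resolve_left h1
    have hFT : F (v T) ≠ 0 := (hFpos T hT le_rfl).ne'
    show (F (v (T - 1)) / F (v T)) ^ (m + 2 - 1) * K - (v T - vs) = 0
    simp only [show m + 2 - 1 = m + 1 from rfl]
    have hgoal : (F (v (T - 1)) / F (v T)) ^ (m + 1) * K - (v T - vs)
        = (F (v (T - 1)) ^ (m + 1) * K - (v T - vs) * F (v T) ^ (m + 1)) / F (v T) ^ (m + 1) := by
      rw [div_pow]
      field_simp
    rw [hgoal, hE, zero_div]
end

section
/- (Theorem 4, Profit-maximizing Recurring Auction: first-order conditions.) Suppose v* = (v_1*, …, v_T*) with vhi > v_1* > … > v_T* > vlo is a local maximizer of R among threshold vectors, and f(v_t*) > 0 and F(v_t*) > 0 for every 1 ≤ t ≤ T. Then, with v_0* = vhi, for every 1 ≤ t < T: ( (F(v_{t−1}*)/F(v_t*))^(N−1) − δ·( N·F(v_t*) − (N−1)·F(v_{t+1}*) )/F(v_t*) )·K − (1 − δ)·( v_t* − (1 − F(v_t*))/f(v_t*) − v_s ) = 0, and for t = T: (F(v_{T−1}*)/F(v_T*))^(N−1)·K − ( v_T* −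 (1 − F(v_T*))/f(v_T*) − v_s ) = 0. -/
open Set Filter Function MeasureTheory intervalIntegral Topology

/-- T-period expected seller revenue at thresholds `u : ℕ → ℝ` (with `u 0 = vhi`):
`R(u) = δ^T·N·(1 − F(u_T))·G(u_T)·u_T + Σ_{t=1}^T δ^(t−1)·( N·∫_{u_t}^{u_{t−1}}
x·(1 − F(x))·(N−1)·F(x)^(N−2)·f(x) dx + N·(1−δ)·(1 − F(u_t))·G(u_t)·u_t
− N·G(u_{t−1})·(F(u_{t−1}) − F(u_t))·K − v_s·(F(u_{t−1})^N − F(u_t)^N) )`,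
where `G = F^(N−1)`. -/
noncomputable def Rev (N T : ℕ) (K vs δ : ℝ) (F f : ℝ → ℝ) (u : ℕ → ℝ) : ℝ :=
  δ ^ T * (N : ℝ) * (1 - F (u T)) * F (u T) ^ (N - 1) * u T
    + ∑ t ∈ Finset.Icc 1 T, δ ^ (t - 1) *
        ((N : ℝ) * (∫ x in (u t)..(u (t - 1)),
            x * (1 - F x) * ((N : ℝ) - 1) * F x ^ (N - 2) * f x)
          + (N : ℝ) * (1 - δ) * (1 - F (u t)) * F (u t) ^ (N - 1) * u t
          - (N : ℝ) * F (u (t - 1)) ^ (N - 1) * (F (u (t - 1)) - F (u t)) * K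
          - vs * (F (u (t - 1)) ^ N - F (u t) ^ N))

/-- helper: derivative of the within-period revenue flow term. -/
noncomputable def Qq (m : ℕ) (F f : ℝ → ℝ) (w : ℝ) : ℝ :=
  (1 - F w) * F w ^ (m + 1)
    + (((m : ℝ) + 1) * F w ^ m * (1 - F w) - F w ^ (m + 1)) * f w * w

/-- helper: the integrand value. -/
noncomputable def Hh (m : ℕ) (F f : ℝ → ℝ) (w : ℝ) : ℝ :=
  w * (1 - F w) * ((m : ℝ) + 1) * F w ^ m * f w

/-- helper: (1/(N δ^(t-1))) times the derivative of the `s = t` summand. -/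
noncomputable def Xx (m : ℕ) (K vs δ : ℝ) (F f : ℝ → ℝ) (wp w : ℝ) : ℝ :=
  -(Hh m F f w) + (1 - δ) * Qq m F f w + F wp ^ (m + 1) * f w * K
    + vs * F w ^ (m + 1) * f w

/-- helper: (1/(N δ^t)) times the derivative of the `s = t+1` summand. -/
noncomputable def Yy (m : ℕ) (K vs : ℝ) (F f : ℝ → ℝ) (w wn : ℝ) : ℝ :=
  Hh m F f w
    - ((((m : ℝ) + 1) * F w ^ m * (F w - F wn) + F w ^ (m + 1)) * f w) * K
    - vs * F w ^ (m + 1) * f w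

/-- Theorem 4 (Profit-maximizing Recurring Auction, first-order conditions): if a strictly
interior decreasing threshold vector `v*` is a local maximizer of `R` among threshold
vectors, and `f(v_t*) > 0`, `F(v_t*) > 0` for all `1 ≤ t ≤ T`, then for `1 ≤ t < T`:
`( (F(v_{t−1}*)/F(v_t*))^(N−1) − δ·(N·F(v_t*) − (N−1)·F(v_{t+1}*))/F(v_t*) )·K
  − (1−δ)·(v_t* − (1 − F(v_t*))/f(v_t*) − v_s) = 0`, and
`(F(v_{T−1}*)/F(v_T*))^(N−1)·K − (v_T* − (1 − F(v_T*))/f(v_T*) − v_s) = 0`. -/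
theorem profit_maximizing_recurring_auction_FOC
    (vlo vhi : ℝ) (hlohi : vlo < vhi)
    (N T : ℕ) (hN : 2 ≤ N) (hT : 1 ≤ T)
    (K : ℝ) (hK : 0 < K)
    (vs : ℝ)
    (δ : ℝ) (hδ0 : 0 < δ) (hδ1 : δ < 1)
    (F f : ℝ → ℝ)
    (hFderiv : ∀ x ∈ Set.Icc vlo vhi, HasDerivAt F (f x) x)
    (hfcont : ContinuousOn f (Set.Icc vlo vhi))
    (hFmono : MonotoneOn F (Set.Icc vlo vhi))
    (hFhi : F vhi = 1)
    (v : ℕ → ℝ)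
    (hv0 : v 0 = vhi)
    (hv1 : v 1 < vhi)
    (hvdec : ∀ t, 1 ≤ t → t < T → v (t + 1) < v t)
    (hvT : vlo < v T)
    (hfpos : ∀ t, 1 ≤ t → t ≤ T → 0 < f (v t))
    (hFpos : ∀ t, 1 ≤ t → t ≤ T → 0 < F (v t))
    (hmax : IsLocalMaxOn (Rev N T K vs δ F f)
      {u : ℕ → ℝ | u 0 = vhi ∧ (∀ t, 1 ≤ t → t ≤ T → u t ≤ u (t - 1)) ∧ vlo ≤ u T} v) :
    (∀ t, 1 ≤ t → t < T →
      ((F (v (t - 1)) / F (v t)) ^ (N - 1)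
          - δ * ((N : ℝ) * F (v t) - ((N : ℝ) - 1) * F (v (t + 1))) / F (v t)) * K
        - (1 - δ) * (v t - (1 - F (v t)) / f (v t) - vs) = 0) ∧
    (F (v (T - 1)) / F (v T)) ^ (N - 1) * K - (v T - (1 - F (v T)) / f (v T) - vs) = 0 := by
  obtain ⟨m, rfl⟩ : ∃ m, N = m + 2 := ⟨N - 2, by omega⟩
  have e1 : m + 2 - 1 = m + 1 := rfl
  have e2 : m + 2 - 2 = m := rfl
  have e3 : m + 1 - 1 = m := rfl
  -- monotonicity chain
  have hle : ∀ a b : ℕ, 1 ≤ a → a ≤ b → b ≤ T → v b ≤ v a := by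
    intro a b ha hab hbT
    induction b with
    | zero => omega
    | succ n ih =>
      rcases Nat.lt_or_ge a (n + 1) with h | h
      · have h1 : v (n + 1) < v n := hvdec n (by omega) (by omega)
        exact le_trans h1.le (ih (by omega) (by omega))
      · have : a = n + 1 := by omega
        subst this; exact le_rfl
  have hIoo : ∀ s, 1 ≤ s → s ≤ T → v s ∈ Set.Ioo vlo vhi := by
    intro s h1 h2
    exact ⟨lt_of_lt_of_le hvT (hle s T h1 h2 le_rfl),
      lt_of_le_of_lt (hle 1 s le_rfl h1 h2) hv1⟩
  have hIcc : ∀ s, s ≤ T → v s ∈ Set.Icc vlo vhi := by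
    intro s hs
    rcases Nat.eq_zero_or_pos s with rfl | h1
    · rw [hv0]; exact ⟨hlohi.le, le_rfl⟩
    · exact Set.Ioo_subset_Icc_self (hIoo s h1 hs)
  have hstep : ∀ s, 1 ≤ s → s ≤ T → v s ≤ v (s - 1) := by
    intro s h1 h2
    rcases eq_or_ne s 1 with rfl | hne
    · simpa [hv0] using hv1.le
    · have h := hle (s - 1) s (by omega) (by omega) h2
      exact h
  -- continuity facts
  have hFc : ∀ x ∈ Set.Icc vlo vhi, ContinuousAt F x := fun x hx => (hFderiv x hx).continuousAt
  have hFco : ContinuousOn F (Set.Icc vlo vhi) := fun x hx => (hFc x hx).continuousWithinAt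
  have hci : ContinuousOn
      (fun y : ℝ => y * (1 - F y) * (((m + 2 : ℕ) : ℝ) - 1) * F y ^ (m + 2 - 2) * f y)
      (Set.Icc vlo vhi) :=
    ((((continuousOn_id.mul (continuousOn_const.sub hFco)).mul continuousOn_const).mul
      (hFco.pow _)).mul hfcont)
  -- continuity of coordinate update
  have hupdc : ∀ t : ℕ, Continuous (fun x : ℝ => Function.update v t x) := by
    intro t
    apply continuous_pi
    intro i
    by_cases h : i = t
    · subst h; simp only [Function.update_self]; exact continuous_id
    · simp only [Function.update_of_ne h]; exact continuous_const
  -- local maximality along each coordinate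
  have hlocmax : ∀ t, 1 ≤ t → t ≤ T →
      IsLocalMax (fun x => Rev (m + 2) T K vs δ F f (Function.update v t x)) (v t) := by
    intro t ht1 htT
    set lo : ℝ := if t = T then vlo else v (t + 1) with hlo
    have hlolt : lo < v t := by
      rcases eq_or_ne t T with rfl | hne
      · simpa [hlo] using hvT
      · rw [hlo, if_neg hne]; exact hvdec t ht1 (lt_of_le_of_ne htT hne)
    have hhigt : v t < v (t - 1) := by
      rcases eq_or_ne t 1 with rfl | hne
      · simpa [hv0] using hv1
      · have h := hvdec (t - 1) (by omega) (by omega)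
        rwa [Nat.sub_add_cancel ht1] at h
    have hmem : ∀ x ∈ Set.Ioo lo (v (t - 1)), Function.update v t x ∈
        {u : ℕ → ℝ | u 0 = vhi ∧ (∀ s, 1 ≤ s → s ≤ T → u s ≤ u (s - 1)) ∧ vlo ≤ u T} := by
      intro x hx
      refine ⟨?_, ?_, ?_⟩
      · rw [Function.update_of_ne (by omega : (0 : ℕ) ≠ t)]; exact hv0
      · intro s hs1 hsT
        rcases eq_or_ne s t with rfl | hst
        · rw [Function.update_self, Function.update_of_ne (by omega : s - 1 ≠ s)]
          exact hx.2.le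
        · rcases eq_or_ne s (t + 1) with rfl | hst1
          · rw [Function.update_of_ne hst, Nat.add_sub_cancel, Function.update_self]
            have hloeq : lo = v (t + 1) := by rw [hlo, if_neg (by omega)]
            rw [← hloeq] at *
            exact hx.1.le
          · rw [Function.update_of_ne hst, Function.update_of_ne (by omega : s - 1 ≠ t)]
            exact hstep s hs1 hsT
      · rcases eq_or_ne T t with rfl | hTt
        · rw [Function.update_self]
          have hloeq : lo = vlo := by rw [hlo, if_pos rfl]
          rw [← hloeq]
          exact hx.1.le
        · rw [Function.update_of_ne hTt]; exact hvT.le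
    have hnhds : Set.Ioo lo (v (t - 1)) ∈ 𝓝 (v t) := Ioo_mem_nhds hlolt hhigt
    have htd : Filter.Tendsto (fun x : ℝ => Function.update v t x) (𝓝 (v t))
        (𝓝[{u : ℕ → ℝ | u 0 = vhi ∧ (∀ s, 1 ≤ s → s ≤ T → u s ≤ u (s - 1)) ∧ vlo ≤ u T}] v) := by
      rw [tendsto_nhdsWithin_iff]
      constructor
      · have h := (hupdc t).tendsto (v t)
        rwa [Function.update_eq_self] at h
      · filter_upwards [hnhds] with x hx using hmem x hx
    have hev := htd.eventually hmax
    show ∀ᶠ x in 𝓝 (v t),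
      Rev (m + 2) T K vs δ F f (Function.update v t x) ≤
        Rev (m + 2) T K vs δ F f (Function.update v t (v t))
    rw [Function.update_eq_self]
    exact hev
  -- the key first-order conditions
  have hkey : ∀ t, 1 ≤ t → t ≤ T →
      (if t = T then δ ^ T * (((m : ℝ) + 2) * Qq m F f (v t)) else 0)
        + (δ ^ (t - 1) * (((m : ℝ) + 2) * Xx m K vs δ F f (v (t - 1)) (v t))
          + (if t + 1 ∈ Finset.Icc 1 T then
              δ ^ t * (((m : ℝ) + 2) * Yy m K vs F f (v t) (v (t + 1))) else 0)) = 0 := by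
    intro t ht1 htT
    have hwIoo := hIoo t ht1 htT
    have hwIcc : v t ∈ Set.Icc vlo vhi := Set.Ioo_subset_Icc_self hwIoo
    have hFw : HasDerivAt F (f (v t)) (v t) := hFderiv _ hwIcc
    have hciA : ContinuousAt
        (fun y : ℝ => y * (1 - F y) * (((m + 2 : ℕ) : ℝ) - 1) * F y ^ (m + 2 - 2) * f y)
        (v t) := hci.continuousAt (Icc_mem_nhds hwIoo.1 hwIoo.2)
    have hmeasA : StronglyMeasurableAtFilter
        (fun y : ℝ => y * (1 - F y) * (((m + 2 : ℕ) : ℝ) - 1) * F y ^ (m + 2 - 2) * f y)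
        (𝓝 (v t)) :=
      ContinuousOn.stronglyMeasurableAtFilter isOpen_Ioo (hci.mono Set.Ioo_subset_Icc_self)
        (v t) hwIoo
    have hint1 : IntervalIntegrable
        (fun y : ℝ => y * (1 - F y) * (((m + 2 : ℕ) : ℝ) - 1) * F y ^ (m + 2 - 2) * f y)
        volume (v t) (v (t - 1)) :=
      (hci.mono (Set.uIcc_subset_Icc hwIcc (hIcc (t - 1) (by omega)))).intervalIntegrable
    have hD : HasDerivAt (fun x => Rev (m + 2) T K vs δ F f (Function.update v t x))
        ((if t = T then δ ^ T * (((m : ℝ) + 2) * Qq m F f (v t)) else 0)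
          + ∑ s ∈ Finset.Icc 1 T,
            (if s = t then δ ^ (t - 1) * (((m : ℝ) + 2) * Xx m K vs δ F f (v (t - 1)) (v t))
             else if s = t + 1 then δ ^ t * (((m : ℝ) + 2) * Yy m K vs F f (v t) (v (t + 1)))
             else 0)) (v t) := by
      simp only [Rev]
      refine HasDerivAt.add ?_ (HasDerivAt.fun_sum fun s hs => ?_)
      · rcases eq_or_ne t T with rfl | hne
        · rw [if_pos rfl]
          simp only [Function.update_self]
          have H := ((((hasDerivAt_const (v t) (1 : ℝ)).fun_sub hFw).const_mul
            (δ ^ t * ((m + 2 : ℕ) : ℝ))).fun_mul (hFw.fun_pow (m + 2 - 1))).fun_mul (hasDerivAt_id' (v t))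
          convert H using 1
          rfl
          simp only [Qq, e1, e3]
          push_cast
          ring
        · rw [if_neg hne]
          refine (hasDerivAt_const (v t)
            (δ ^ T * ((m + 2 : ℕ) : ℝ) * (1 - F (v T)) * F (v T) ^ (m + 2 - 1) * v T)).congr_of_eventuallyEq
            (Filter.Eventually.of_forall fun x => ?_)
          simp only [Function.update_of_ne (fun h => hne h.symm)]
      · simp only [Finset.mem_Icc] at hs
        by_cases hst : s = t
        · subst hst
          rw [if_pos rfl]
          simp only [Function.update_self,
            Function.update_of_ne (show s - 1 ≠ s by omega)]
          have H := HasDerivAt.const_mul (δ ^ (s - 1))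
            ((((intervalIntegral.integral_hasDerivAt_left hint1 hmeasA hciA).const_mul
                ((m + 2 : ℕ) : ℝ)).fun_add
              (((((hasDerivAt_const (v s) (1 : ℝ)).fun_sub hFw).const_mul
                (((m + 2 : ℕ) : ℝ) * (1 - δ))).fun_mul (hFw.fun_pow (m + 2 - 1))).fun_mul
                (hasDerivAt_id' (v s)))).fun_sub
              ((((hasDerivAt_const (v s) (F (v (s - 1)))).fun_sub hFw).const_mul
                (((m + 2 : ℕ) : ℝ) * F (v (s - 1)) ^ (m + 2 - 1))).mul_const K) |>.fun_sub
              (((hasDerivAt_const (v s) (F (v (s - 1)) ^ (m + 2))).fun_sub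
                (hFw.fun_pow (m + 2))).const_mul vs))
          convert H using 1
          rfl
          simp only [Xx, Qq, Hh, e1, e2, e3]
          push_cast
          ring
        · by_cases hst1 : s = t + 1
          · subst hst1
            rw [if_neg hst, if_pos rfl]
            have hint2 : IntervalIntegrable
                (fun y : ℝ => y * (1 - F y) * (((m + 2 : ℕ) : ℝ) - 1) * F y ^ (m + 2 - 2) * f y)
                volume (v (t + 1)) (v t) :=
              (hci.mono (Set.uIcc_subset_Icc (hIcc (t + 1) (by omega)) hwIcc)).intervalIntegrable
            have hup : ∀ x : ℝ, Function.update v t x (t + 1 - 1) = x := fun x =>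
              Function.update_self t x v
            simp only [Nat.add_sub_cancel, hup, Function.update_self,
              Function.update_of_ne (show t + 1 ≠ t by omega)]
            have H := HasDerivAt.const_mul (δ ^ t)
              (((((intervalIntegral.integral_hasDerivAt_right hint2 hmeasA hciA).const_mul
                  ((m + 2 : ℕ) : ℝ)).add_const
                (((m + 2 : ℕ) : ℝ) * (1 - δ) * (1 - F (v (t + 1))) * F (v (t + 1)) ^ (m + 2 - 1)
                  * v (t + 1))).fun_sub
                ((((hFw.fun_pow (m + 2 - 1)).const_mul ((m + 2 : ℕ) : ℝ)).fun_mul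
                  (hFw.sub_const (F (v (t + 1))))).mul_const K)).fun_sub
                (((hFw.fun_pow (m + 2)).sub_const (F (v (t + 1)) ^ (m + 2))).const_mul vs))
            convert H using 1
            rfl
            rfl
            simp only [Yy, Hh, e1, e2, e3]
            push_cast
            ring
          · rw [if_neg hst, if_neg hst1]
            refine (hasDerivAt_const (v t) (δ ^ (s - 1) *
              (((m + 2 : ℕ) : ℝ) * (∫ y in (v s)..(v (s - 1)),
                  y * (1 - F y) * (((m + 2 : ℕ) : ℝ) - 1) * F y ^ (m + 2 - 2) * f y)
                + ((m + 2 : ℕ) : ℝ) * (1 - δ) * (1 - F (v s)) * F (v s) ^ (m + 2 - 1) * v s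
                - ((m + 2 : ℕ) : ℝ) * F (v (s - 1)) ^ (m + 2 - 1) * (F (v (s - 1)) - F (v s)) * K
                - vs * (F (v (s - 1)) ^ (m + 2) - F (v s) ^ (m + 2))))).congr_of_eventuallyEq
              (Filter.Eventually.of_forall fun x => ?_)
            simp only [Function.update_of_ne hst,
              Function.update_of_ne (show s - 1 ≠ t by omega)]
    have h0 := (hlocmax t ht1 htT).hasDerivAt_eq_zero hD
    -- compute the sum of the if-expression
    have hsum : (∑ s ∈ Finset.Icc 1 T,
        (if s = t then δ ^ (t - 1) * (((m : ℝ) + 2) * Xx m K vs δ F f (v (t - 1)) (v t))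
         else if s = t + 1 then δ ^ t * (((m : ℝ) + 2) * Yy m K vs F f (v t) (v (t + 1)))
         else 0)) =
        δ ^ (t - 1) * (((m : ℝ) + 2) * Xx m K vs δ F f (v (t - 1)) (v t))
          + (if t + 1 ∈ Finset.Icc 1 T then
              δ ^ t * (((m : ℝ) + 2) * Yy m K vs F f (v t) (v (t + 1))) else 0) := by
      have hrw : ∀ s ∈ Finset.Icc 1 T,
          (if s = t then δ ^ (t - 1) * (((m : ℝ) + 2) * Xx m K vs δ F f (v (t - 1)) (v t))
           else if s = t + 1 then δ ^ t * (((m : ℝ) + 2) * Yy m K vs F f (v t) (v (t + 1)))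
           else 0) =
          (if s = t then δ ^ (t - 1) * (((m : ℝ) + 2) * Xx m K vs δ F f (v (t - 1)) (v t)) else 0)
            + (if s = t + 1 then
                δ ^ t * (((m : ℝ) + 2) * Yy m K vs F f (v t) (v (t + 1))) else 0) := by
        intro s _
        by_cases h1 : s = t
        · simp [h1, show ¬(t = t + 1) by omega]
        · by_cases h2 : s = t + 1
          · subst h2
            simp [h1]
          · simp [h1, h2]
      rw [Finset.sum_congr rfl hrw, Finset.sum_add_distrib,
        Finset.sum_ite_eq' (Finset.Icc 1 T) t, Finset.sum_ite_eq' (Finset.Icc 1 T) (t + 1),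
        if_pos (show t ∈ Finset.Icc 1 T by simp [Finset.mem_Icc]; omega)]
    rw [hsum] at h0
    exact h0
  have hm2 : ((m : ℝ) + 2) ≠ 0 := by positivity
  constructor
  · -- case 1 ≤ t < T
    intro t ht1 htT
    obtain ⟨r, rfl⟩ : ∃ r, t = r + 1 := ⟨t - 1, by omega⟩
    have hk := hkey (r + 1) (by omega) (by omega)
    rw [if_neg (show ¬(r + 1 = T) by omega), if_pos (show r + 1 + 1 ∈ Finset.Icc 1 T by simp [Finset.mem_Icc]; omega)] at hk
    simp only [Nat.add_sub_cancel] at hk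
    have h2 : δ ^ r * (((m : ℝ) + 2) * (Xx m K vs δ F f (v r) (v (r + 1))
        + δ * Yy m K vs F f (v (r + 1)) (v (r + 1 + 1)))) = 0 := by
      linear_combination hk
    have hXY : Xx m K vs δ F f (v r) (v (r + 1))
        + δ * Yy m K vs F f (v (r + 1)) (v (r + 1 + 1)) = 0 := by
      rcases mul_eq_zero.mp h2 with h | h
      · exact absurd h (pow_ne_zero r hδ0.ne')
      · rcases mul_eq_zero.mp h with h' | h'
        · exact absurd h' hm2
        · exact h'
    have hF0 : F (v (r + 1)) ≠ 0 := (hFpos _ (by omega) (by omega)).ne'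
    have hf0 : f (v (r + 1)) ≠ 0 := (hfpos _ (by omega) (by omega)).ne'
    have hid : ((F (v r) / F (v (r + 1))) ^ (m + 2 - 1)
          - δ * (((m + 2 : ℕ) : ℝ) * F (v (r + 1)) - (((m + 2 : ℕ) : ℝ) - 1) * F (v (r + 1 + 1)))
            / F (v (r + 1))) * K
        - (1 - δ) * (v (r + 1) - (1 - F (v (r + 1))) / f (v (r + 1)) - vs)
        = (Xx m K vs δ F f (v r) (v (r + 1)) + δ * Yy m K vs F f (v (r + 1)) (v (r + 1 + 1)))
            / (f (v (r + 1)) * F (v (r + 1)) ^ (m + 1)) := by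
      simp only [Xx, Yy, Qq, Hh, e1]
      rw [div_pow]
      field_simp
      push_cast
      ring
    simp only [Nat.add_sub_cancel]
    exact hid.trans (by rw [hXY]; exact zero_div _)
  · -- case t = T
    obtain ⟨r, rfl⟩ : ∃ r, T = r + 1 := ⟨T - 1, by omega⟩
    have hk := hkey (r + 1) (by omega) (by omega)
    rw [if_pos rfl, if_neg (show ¬(r + 1 + 1 ∈ Finset.Icc 1 (r + 1)) by simp [Finset.mem_Icc])] at hk
    simp only [Nat.add_sub_cancel] at hk
    have h2 : δ ^ r * (((m : ℝ) + 2) * (Xx m K vs δ F f (v r) (v (r + 1))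
        + δ * Qq m F f (v (r + 1)))) = 0 := by
      linear_combination hk
    have hXQ : Xx m K vs δ F f (v r) (v (r + 1)) + δ * Qq m F f (v (r + 1)) = 0 := by
      rcases mul_eq_zero.mp h2 with h | h
      · exact absurd h (pow_ne_zero r hδ0.ne')
      · rcases mul_eq_zero.mp h with h' | h'
        · exact absurd h' hm2
        · exact h'
    have hF0 : F (v (r + 1)) ≠ 0 := (hFpos _ (by omega) (by omega)).ne'
    have hf0 : f (v (r + 1)) ≠ 0 := (hfpos _ (by omega) (by omega)).ne'
    have hid : (F (v r) / F (v (r + 1))) ^ (m + 2 - 1) * K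
        - (v (r + 1) - (1 - F (v (r + 1))) / f (v (r + 1)) - vs)
        = (Xx m K vs δ F f (v r) (v (r + 1)) + δ * Qq m F f (v (r + 1)))
            / (f (v (r + 1)) * F (v (r + 1)) ^ (m + 1)) := by
      simp only [Xx, Qq, Hh, e1]
      rw [div_pow]
      field_simp
      push_cast
      ring
    simp only [Nat.add_sub_cancel]
    exact hid.trans (by rw [hXQ]; exact zero_div _)
end

section
/- (Revenue identity, equation (8) of the paper.) Suppose G(v_t) > 0 for every 1 ≤ t ≤ T, and define, for each 1 ≤ t ≤ T, r_t = (1/G(v_t)) · ( Σ_{τ=t}^{T} (1−δ)·δ^(τ−t)·G(v_τ)·v_τ − K·G(v_{t−1}) + Σ_{τ=t}^{T−1} δ^(τ−t+1) · ∫_{v_{τ+1}}^{v_τ} x·(N−1)·F(x)^(N−2)·f(x) dx + δ^(T−t+1)·G(v_T)·v_T ). Then the seller's expected profit expressed via reserve prices equals R(v): Σ_{t=1}^T δ^(t−1)·( N·(N−1)·∫_{v_t}^{v_{t−1}} (x − v_s)·f(x)·(F(v_{t−1}) − F(x))·F(x)^(N−2) dx + N·(F(v_{t−1}) − F(v_t))·G(v_t)·(r_t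 − v_s) ) = R(v). -/
open MeasureTheory

/-- Auxiliary: the per-period integral `∫_{v_t}^{v_{t-1}} x (N-1) F^{N-2} f`. -/
noncomputable def Paux (N : ℕ) (F f : ℝ → ℝ) (v : ℕ → ℝ) (t : ℕ) : ℝ :=
  ∫ x in (v t)..(v (t-1)), x * ((N:ℝ)-1) * F x ^ (N-2) * f x

/-- Auxiliary: `G(v_t) r_t + K G(v_{t-1})`. -/
noncomputable def Saux (N T : ℕ) (δ : ℝ) (F f : ℝ → ℝ) (v : ℕ → ℝ) (t : ℕ) : ℝ :=
  (∑ τ ∈ Finset.Icc t T, (1-δ) * δ^(τ-t) * F (v τ)^(N-1) * v τ)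
  + (∑ τ ∈ Finset.Icc t (T-1), δ^(τ-t+1) * Paux N F f v (τ+1))
  + δ^(T-t+1) * F (v T)^(N-1) * v T

lemma sum_Icc_shift' (f : ℕ → ℝ) (a b : ℕ) :
    ∑ k ∈ Finset.Icc (a+1) (b+1), f k = ∑ k ∈ Finset.Icc a b, f (k+1) := by
  rw [← Finset.map_add_right_Icc, Finset.sum_map]
  rfl

lemma sum_Icc_bot' {a b : ℕ} (h : a ≤ b) (f : ℕ → ℝ) :
    ∑ k ∈ Finset.Icc a b, f k = f a + ∑ k ∈ Finset.Icc (a+1) b, f k := by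
  rw [Finset.Icc_add_one_left_eq_Ioc, ← Finset.add_sum_Ioc_eq_sum_Icc h]

lemma Saux_T (N T : ℕ) (hT : 1 ≤ T) (δ : ℝ) (F f : ℝ → ℝ) (v : ℕ → ℝ) :
    Saux N T δ F f v T = F (v T)^(N-1) * v T := by
  unfold Saux
  rw [Finset.Icc_self, Finset.sum_singleton,
      Finset.Icc_eq_empty (by omega : ¬ T ≤ T - 1), Finset.sum_empty, Nat.sub_self]
  norm_num
  ring

lemma Saux_rec (N T : ℕ) (δ : ℝ) (F f : ℝ → ℝ) (v : ℕ → ℝ) (t : ℕ)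
    (h2 : t < T) :
    Saux N T δ F f v t = (1-δ) * F (v t)^(N-1) * v t
      + δ * (Paux N F f v (t+1) + Saux N T δ F f v (t+1)) := by
  unfold Saux
  rw [sum_Icc_bot' (show t ≤ T by omega), sum_Icc_bot' (show t ≤ T - 1 by omega)]
  have e1 : ∑ τ ∈ Finset.Icc (t+1) T, (1-δ) * δ^(τ-t) * F (v τ)^(N-1) * v τ
      = δ * ∑ τ ∈ Finset.Icc (t+1) T, (1-δ) * δ^(τ-(t+1)) * F (v τ)^(N-1) * v τ := by
    rw [Finset.mul_sum]
    refine Finset.sum_congr rfl fun τ hτ => ?_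
    rw [Finset.mem_Icc] at hτ
    rw [show τ - t = (τ - (t+1)) + 1 by omega, pow_succ]; ring
  have e2 : ∑ τ ∈ Finset.Icc (t+1) (T-1), δ^(τ-t+1) * Paux N F f v (τ+1)
      = δ * ∑ τ ∈ Finset.Icc (t+1) (T-1), δ^(τ-(t+1)+1) * Paux N F f v (τ+1) := by
    rw [Finset.mul_sum]
    refine Finset.sum_congr rfl fun τ hτ => ?_
    rw [Finset.mem_Icc] at hτ
    rw [show τ - t + 1 = (τ - (t+1) + 1) + 1 by omega, pow_succ]; ring
  rw [e1, e2, Nat.sub_self, show T - t + 1 = (T - (t+1) + 1) + 1 by omega, pow_succ]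
  ring

lemma tele (δ : ℝ) : ∀ T : ℕ, 1 ≤ T → ∀ a b g w p s : ℕ → ℝ,
    (∀ t, 1 ≤ t → t < T → a (t+1) = b t) →
    s T = g T * w T →
    (∀ t, 1 ≤ t → t < T → s t = (1-δ) * g t * w t + δ * (p (t+1) + s (t+1))) →
    ∑ t ∈ Finset.Icc 1 T, δ^(t-1) * ((a t - 1) * p t + (a t - b t) * s t
        - (1-δ)*(1-b t)*g t*w t)
      = δ^T * (1 - b T) * g T * w T + (a 1 - 1) * (p 1 + s 1) := by
  intro T hT
  induction T, hT using Nat.le_induction with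
  | base =>
    intro a b g w p s _ hsT _
    simp only [Finset.Icc_self, Finset.sum_singleton, pow_one]
    rw [hsT]; ring
  | succ T hT ih =>
    intro a b g w p s hab hsT hrec
    rw [sum_Icc_bot' (by omega), sum_Icc_shift']
    have hshift : ∑ t ∈ Finset.Icc 1 T, δ^(t+1-1) * ((a (t+1) - 1) * p (t+1)
          + (a (t+1) - b (t+1)) * s (t+1) - (1-δ)*(1-b (t+1))*g (t+1)*w (t+1))
        = δ * ∑ t ∈ Finset.Icc 1 T, δ^(t-1) * ((a (t+1) - 1) * p (t+1)
          + (a (t+1) - b (t+1)) * s (t+1) - (1-δ)*(1-b (t+1))*g (t+1)*w (t+1)) := by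
      rw [Finset.mul_sum]
      refine Finset.sum_congr rfl fun t ht => ?_
      rw [Finset.mem_Icc] at ht
      rw [show t+1-1 = (t-1)+1 by omega, pow_succ]
      ring
    rw [hshift, ih (fun t => a (t+1)) (fun t => b (t+1)) (fun t => g (t+1))
      (fun t => w (t+1)) (fun t => p (t+1)) (fun t => s (t+1))
      (fun t h1 h2 => hab (t+1) (by omega) (by omega)) hsT
      (fun t h1 h2 => hrec (t+1) (by omega) (by omega))]
    have ha2 : a 2 = b 1 := hab 1 (by omega) (by omega)
    have hs1 : s 1 = (1-δ) * g 1 * w 1 + δ * (p 2 + s 2) := hrec 1 (by omega) (by omega)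
    rw [ha2]
    norm_num [pow_succ]
    linear_combination (1 - b 1) * hs1

lemma integral_split (vlo vhi : ℝ) (N : ℕ) (hN : 2 ≤ N) (F f : ℝ → ℝ)
    (hFderiv : ∀ x ∈ Set.Icc vlo vhi, HasDerivAt F (f x) x)
    (hfcont : ContinuousOn f (Set.Icc vlo vhi))
    (vs A : ℝ) (a b : ℝ) (h1 : vlo ≤ a) (h2 : a ≤ b) (h3 : b ≤ vhi) :
    ((N:ℝ)*((N:ℝ)-1)) * (∫ x in a..b, (x - vs) * f x * (A - F x) * F x ^ (N-2))
    = (N:ℝ)*(A-1) * (∫ x in a..b, x * ((N:ℝ)-1) * F x ^ (N-2) * f x)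
      + (N:ℝ) * (∫ x in a..b, x * (1 - F x) * ((N:ℝ)-1) * F x ^ (N-2) * f x)
      - vs * (N:ℝ) * A * (F b^(N-1) - F a^(N-1))
      + vs * ((N:ℝ)-1) * (F b^N - F a^N) := by
  have hsub : Set.uIcc a b ⊆ Set.Icc vlo vhi := by
    rw [Set.uIcc_of_le h2]; exact Set.Icc_subset_Icc h1 h3
  have hFc : ContinuousOn F (Set.uIcc a b) :=
    fun x hx => ((hFderiv x (hsub hx)).continuousAt).continuousWithinAt
  have hfc : ContinuousOn f (Set.uIcc a b) := hfcont.mono hsub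
  have hxc : ContinuousOn (fun x : ℝ => x) (Set.uIcc a b) := continuousOn_id
  have hg1 : ContinuousOn (fun x => x * ((N:ℝ)-1) * F x ^ (N-2) * f x) (Set.uIcc a b) :=
    (((hxc.mul continuousOn_const).mul (hFc.pow _)).mul hfc)
  have hg2 : ContinuousOn (fun x => x * (1 - F x) * ((N:ℝ)-1) * F x ^ (N-2) * f x) (Set.uIcc a b) :=
    ((((hxc.mul (continuousOn_const.sub hFc)).mul continuousOn_const).mul (hFc.pow _)).mul hfc)
  have hg3 : ContinuousOn (fun x => ((N-1:ℕ):ℝ) * F x ^ (N-2) * f x) (Set.uIcc a b) :=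
    ((continuousOn_const.mul (hFc.pow _)).mul hfc)
  have hg4 : ContinuousOn (fun x => ((N:ℕ):ℝ) * F x ^ (N-1) * f x) (Set.uIcc a b) :=
    ((continuousOn_const.mul (hFc.pow _)).mul hfc)
  have i1 : IntervalIntegrable _ volume a b := hg1.intervalIntegrable
  have i2 : IntervalIntegrable _ volume a b := hg2.intervalIntegrable
  have i3 : IntervalIntegrable _ volume a b := hg3.intervalIntegrable
  have i4 : IntervalIntegrable _ volume a b := hg4.intervalIntegrable
  have ftc3 : (∫ x in a..b, ((N-1:ℕ):ℝ) * F x ^ (N-2) * f x) = F b^(N-1) - F a^(N-1) := by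
    have hd : ∀ x ∈ Set.uIcc a b, HasDerivAt (fun y => F y ^ (N-1))
        (((N-1:ℕ):ℝ) * F x ^ (N-2) * f x) x := by
      intro x hx
      have := (hFderiv x (hsub hx)).pow (N-1)
      rw [show N-1-1 = N-2 by omega] at this
      exact this
    exact intervalIntegral.integral_eq_sub_of_hasDerivAt hd i3
  have ftc4 : (∫ x in a..b, ((N:ℕ):ℝ) * F x ^ (N-1) * f x) = F b^N - F a^N := by
    have hd : ∀ x ∈ Set.uIcc a b, HasDerivAt (fun y => F y ^ N)
        (((N:ℕ):ℝ) * F x ^ (N-1) * f x) x := fun x hx => (hFderiv x (hsub hx)).pow N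
    exact intervalIntegral.integral_eq_sub_of_hasDerivAt hd i4
  have hcast : ((N-1:ℕ):ℝ) = (N:ℝ) - 1 := by
    push_cast [Nat.cast_sub (by omega : 1 ≤ N)]; ring
  have hpow : ∀ y : ℝ, F y ^ (N-1) = F y ^ (N-2) * F y := by
    intro y; rw [← pow_succ]; congr 1; omega
  calc ((N:ℝ)*((N:ℝ)-1)) * (∫ x in a..b, (x - vs) * f x * (A - F x) * F x ^ (N-2))
      = ∫ x in a..b, ((N:ℝ)*((N:ℝ)-1)) * ((x - vs) * f x * (A - F x) * F x ^ (N-2)) :=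
        (intervalIntegral.integral_const_mul _ _).symm
    _ = ∫ x in a..b, (((N:ℝ)*(A-1)) * (x * ((N:ℝ)-1) * F x ^ (N-2) * f x)
          + (((N:ℝ)) * (x * (1 - F x) * ((N:ℝ)-1) * F x ^ (N-2) * f x)
          + ((-vs * (N:ℝ) * A) * (((N-1:ℕ):ℝ) * F x ^ (N-2) * f x)
          + (vs * ((N:ℝ)-1)) * (((N:ℕ):ℝ) * F x ^ (N-1) * f x)))) := by
        exact intervalIntegral.integral_congr (fun x hx => by
          rw [hcast, hpow x]; ring)
    _ = ((N:ℝ)*(A-1)) * (∫ x in a..b, x * ((N:ℝ)-1) * F x ^ (N-2) * f x)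
          + (((N:ℝ)) * (∫ x in a..b, x * (1 - F x) * ((N:ℝ)-1) * F x ^ (N-2) * f x)
          + ((-vs * (N:ℝ) * A) * (∫ x in a..b, ((N-1:ℕ):ℝ) * F x ^ (N-2) * f x)
          + (vs * ((N:ℝ)-1)) * (∫ x in a..b, ((N:ℕ):ℝ) * F x ^ (N-1) * f x))) := by
        rw [intervalIntegral.integral_add (i1.const_mul _)
              ((i2.const_mul _).add ((i3.const_mul _).add (i4.const_mul _))),
            intervalIntegral.integral_add (i2.const_mul _)
              ((i3.const_mul _).add (i4.const_mul _)),
            intervalIntegral.integral_add (i3.const_mul _) (i4.const_mul _),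
            intervalIntegral.integral_const_mul, intervalIntegral.integral_const_mul,
            intervalIntegral.integral_const_mul, intervalIntegral.integral_const_mul]
    _ = _ := by rw [ftc3, ftc4]; ring

/-- Revenue identity: with reserve prices `r_t` obtained from the entry-threshold inversion
formula, the seller's expected profit expressed via reserve prices,
`Σ_{t=1}^T δ^(t−1)·( N·(N−1)·∫_{v_t}^{v_{t−1}} (x − v_s)·f(x)·(F(v_{t−1}) − F(x))·F(x)^(N−2) dx
+ N·(F(v_{t−1}) − F(v_t))·G(v_t)·(r_t − v_s) )`, equals `R(v)`. -/
theorem revenue_identity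
    (vlo vhi : ℝ) (hlohi : vlo < vhi)
    (N T : ℕ) (hN : 2 ≤ N) (hT : 1 ≤ T)
    (K : ℝ) (hK : 0 < K)
    (vs : ℝ)
    (δ : ℝ) (hδ0 : 0 < δ) (hδ1 : δ < 1)
    (F f : ℝ → ℝ)
    (hFderiv : ∀ x ∈ Set.Icc vlo vhi, HasDerivAt F (f x) x)
    (hfcont : ContinuousOn f (Set.Icc vlo vhi))
    (hFmono : MonotoneOn F (Set.Icc vlo vhi))
    (hFhi : F vhi = 1)
    (v : ℕ → ℝ)
    (hv0 : v 0 = vhi)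
    (hvmono : ∀ t, 1 ≤ t → t ≤ T → v t ≤ v (t - 1))
    (hvT : vlo ≤ v T)
    (hGpos : ∀ t, 1 ≤ t → t ≤ T → 0 < F (v t) ^ (N - 1))
    (r : ℕ → ℝ)
    (hr : ∀ t, 1 ≤ t → t ≤ T →
      r t = (1 / F (v t) ^ (N - 1)) *
        ((∑ τ ∈ Finset.Icc t T, (1 - δ) * δ ^ (τ - t) * F (v τ) ^ (N - 1) * v τ)
          - K * F (v (t - 1)) ^ (N - 1)
          + (∑ τ ∈ Finset.Icc t (T - 1), δ ^ (τ - t + 1) *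
              ∫ x in (v (τ + 1))..(v τ), x * ((N : ℝ) - 1) * F x ^ (N - 2) * f x)
          + δ ^ (T - t + 1) * F (v T) ^ (N - 1) * v T)) :
    ∑ t ∈ Finset.Icc 1 T, δ ^ (t - 1) *
        ((N : ℝ) * ((N : ℝ) - 1) * (∫ x in (v t)..(v (t - 1)),
            (x - vs) * f x * (F (v (t - 1)) - F x) * F x ^ (N - 2))
          + (N : ℝ) * (F (v (t - 1)) - F (v t)) * F (v t) ^ (N - 1) * (r t - vs))
      = Rev N T K vs δ F f v := by
  have hchain : ∀ i j, i ≤ j → j ≤ T → v j ≤ v i := by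
    intro i j hij hjT
    induction j with
    | zero => have h0 : i = 0 := by omega
              subst h0; exact le_rfl
    | succ k ih =>
      rcases Nat.lt_or_ge i (k+1) with h | h
      · exact le_trans (hvmono (k+1) (by omega) hjT) (ih (by omega) (by omega))
      · have h0 : i = k+1 := by omega
        subst h0; exact le_rfl
  have hlo : ∀ t, t ≤ T → vlo ≤ v t := fun t ht => le_trans hvT (hchain t T ht le_rfl)
  have hhi : ∀ t, t ≤ T → v t ≤ vhi := fun t ht => by
    rw [← hv0]; exact hchain 0 t (Nat.zero_le _) ht
  have key : ∀ t ∈ Finset.Icc 1 T,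
      δ ^ (t - 1) * ((N : ℝ) * ((N : ℝ) - 1) * (∫ x in (v t)..(v (t - 1)),
            (x - vs) * f x * (F (v (t - 1)) - F x) * F x ^ (N - 2))
          + (N : ℝ) * (F (v (t - 1)) - F (v t)) * F (v t) ^ (N - 1) * (r t - vs))
      = (δ ^ (t - 1) * ((N : ℝ) * (∫ x in (v t)..(v (t - 1)),
            x * (1 - F x) * ((N : ℝ) - 1) * F x ^ (N - 2) * f x)
          + (N : ℝ) * (1 - δ) * (1 - F (v t)) * F (v t) ^ (N - 1) * v t
          - (N : ℝ) * F (v (t - 1)) ^ (N - 1) * (F (v (t - 1)) - F (v t)) * K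
          - vs * (F (v (t - 1)) ^ N - F (v t) ^ N))
        + (N : ℝ) * (δ ^ (t - 1) * ((F (v (t - 1)) - 1) * Paux N F f v t
            + (F (v (t - 1)) - F (v t)) * Saux N T δ F f v t
            - (1 - δ) * (1 - F (v t)) * F (v t) ^ (N - 1) * v t))) := by
    intro t ht
    rw [Finset.mem_Icc] at ht
    have hsplit := integral_split vlo vhi N hN F f hFderiv hfcont vs (F (v (t-1)))
      (v t) (v (t-1)) (hlo t ht.2) (hvmono t ht.1 ht.2) (hhi (t-1) (by omega))
    have hPdef : Paux N F f v t
        = ∫ x in (v t)..(v (t-1)), x * ((N:ℝ)-1) * F x ^ (N-2) * f x := rfl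
    rw [← hPdef] at hsplit
    have hne : F (v t) ^ (N-1) ≠ 0 := (hGpos t ht.1 ht.2).ne'
    have hGr : F (v t)^(N-1) * r t = Saux N T δ F f v t - K * F (v (t-1))^(N-1) := by
      rw [hr t ht.1 ht.2]
      simp only [Saux, Paux, Nat.add_sub_cancel]
      rw [← mul_assoc, mul_one_div_cancel hne, one_mul]
      ring
    have hA : F (v (t-1))^N = F (v (t-1))^(N-1) * F (v (t-1)) := by
      rw [← pow_succ]; congr 1; omega
    have hB : F (v t)^N = F (v t)^(N-1) * F (v t) := by
      rw [← pow_succ]; congr 1; omega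
    rw [hA, hB] at hsplit ⊢
    linear_combination δ^(t-1) * hsplit + δ^(t-1) * (N:ℝ) * (F (v (t-1)) - F (v t)) * hGr
  have tele_res : ∑ t ∈ Finset.Icc 1 T, δ^(t-1) * ((F (v (t-1)) - 1) * Paux N F f v t
        + (F (v (t-1)) - F (v t)) * Saux N T δ F f v t
        - (1-δ)*(1-F (v t))*F (v t)^(N-1)*v t)
      = δ^T * (1 - F (v T)) * F (v T)^(N-1) * v T
        + (F (v 0) - 1) * (Paux N F f v 1 + Saux N T δ F f v 1) :=
    tele δ T hT (fun t => F (v (t-1))) (fun t => F (v t)) (fun t => F (v t)^(N-1)) v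
      (Paux N F f v) (Saux N T δ F f v)
      (fun t _ _ => rfl) (Saux_T N T hT δ F f v)
      (fun t _ h2 => Saux_rec N T δ F f v t h2)
  have hone : F (v 0) = 1 := by rw [hv0, hFhi]
  rw [Finset.sum_congr rfl key, Finset.sum_add_distrib, ← Finset.mul_sum, tele_res, hone]
  simp only [Rev]
  ring
end

section
/- (Monotone comparison corollary used in the equilibrium verification.) Let 1 ≤ t < t' ≤ T + 1, where either t' ≤ T and F(v_{t'}) > 0, or t = T, t' = T + 1 and F(v_T) > 0. Then: (i) if Π_t(v_t) ≥ Π_{t'}(v_t), then Π_t(v) > Π_{t'}(v) for every v ∈ (v_t, vhi]; and (ii) if Π_t(v_t) ≤ Π_{t'}(v_t), then Π_t(v) < Π_{t'}(v) for every v ∈ [vlo, v_t). -/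
open Set Filter intervalIntegral


section Aux

variable {vlo vhi : ℝ} {F f : ℝ → ℝ} {N : ℕ}

lemma f_nonneg (hlohi : vlo < vhi)
    (hFderiv : ∀ x ∈ Set.Icc vlo vhi, HasDerivAt F (f x) x)
    (hFmono : MonotoneOn F (Set.Icc vlo vhi)) :
    ∀ x ∈ Set.Icc vlo vhi, 0 ≤ f x := by
  intro x hx
  have hslope := hasDerivAt_iff_tendsto_slope.1 (hFderiv x hx)
  rcases lt_or_eq_of_le hx.2 with hlt | heq
  · haveI := left_nhdsWithin_Ioc_neBot hlt
    have h1 : Tendsto (slope F x) (nhdsWithin x (Set.Ioc x vhi)) (nhds (f x)) :=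
      hslope.mono_left (nhdsWithin_mono x (fun y hy => ne_of_gt hy.1))
    refine ge_of_tendsto h1 ?_
    filter_upwards [self_mem_nhdsWithin] with y hy
    rw [slope_def_field]
    refine div_nonneg ?_ (by linarith [hy.1])
    have := hFmono hx ⟨le_trans hx.1 (le_of_lt hy.1), hy.2⟩ (le_of_lt hy.1)
    linarith
  · have hvx : vlo < x := heq ▸ hlohi
    haveI := right_nhdsWithin_Ioo_neBot hvx
    have h1 : Tendsto (slope F x) (nhdsWithin x (Set.Ioo vlo x)) (nhds (f x)) :=
      hslope.mono_left (nhdsWithin_mono x (fun y hy => ne_of_lt hy.2))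
    refine ge_of_tendsto h1 ?_
    filter_upwards [self_mem_nhdsWithin] with y hy
    rw [slope_def_field]
    have hyI : y ∈ Set.Icc vlo vhi := ⟨le_of_lt hy.1, le_trans (le_of_lt hy.2) hx.2⟩
    have := hFmono hyI hx (le_of_lt hy.2)
    exact div_nonneg_of_nonpos (by linarith) (by linarith [hy.2])

end Aux

section Aux2

variable {vlo vhi : ℝ} {F f : ℝ → ℝ} {N : ℕ}

lemma G_ftc (hN : 2 ≤ N)
    (hFderiv : ∀ x ∈ Set.Icc vlo vhi, HasDerivAt F (f x) x)
    (hfcont : ContinuousOn f (Set.Icc vlo vhi))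
    {a b : ℝ} (ha : a ∈ Set.Icc vlo vhi) (hb : b ∈ Set.Icc vlo vhi) :
    ∫ x in a..b, ((N : ℝ) - 1) * F x ^ (N - 2) * f x
      = F b ^ (N - 1) - F a ^ (N - 1) := by
  have hsub : Set.uIcc a b ⊆ Set.Icc vlo vhi := Set.uIcc_subset_Icc ha hb
  have hFcont : ContinuousOn F (Set.Icc vlo vhi) :=
    fun x hx => (hFderiv x hx).continuousAt.continuousWithinAt
  have hderiv : ∀ x ∈ Set.uIcc a b,
      HasDerivAt (fun y => F y ^ (N - 1)) (((N : ℝ) - 1) * F x ^ (N - 2) * f x) x := by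
    intro x hx
    have h := (hFderiv x (hsub hx)).pow (N - 1)
    have hcast : ((N - 1 : ℕ) : ℝ) = (N : ℝ) - 1 := by
      rw [Nat.cast_sub (by omega)]; norm_num
    have hexp : N - 1 - 1 = N - 2 := by omega
    rw [hcast, hexp] at h
    exact h
  have hint : IntervalIntegrable (fun x => ((N : ℝ) - 1) * F x ^ (N - 2) * f x)
      MeasureTheory.volume a b := by
    apply ContinuousOn.intervalIntegrable
    exact (continuousOn_const.mul ((hFcont.mono hsub).pow _)).mul (hfcont.mono hsub)
  exact intervalIntegral.integral_eq_sub_of_hasDerivAt hderiv hint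

lemma max_rewrite
    (hfcont : ContinuousOn f (Set.Icc vlo vhi))
    (hFcont : ContinuousOn F (Set.Icc vlo vhi))
    {a b : ℝ} (hab : a ≤ b) (hav : vlo ≤ a) (hbv : b ≤ vhi) (v : ℝ) :
    (∫ x in a..(min (max v a) b), (v - x) * ((N : ℝ) - 1) * F x ^ (N - 2) * f x)
      = ∫ x in a..b, max (v - x) 0 * (((N : ℝ) - 1) * F x ^ (N - 2) * f x) := by
  set g : ℝ → ℝ := fun x => ((N : ℝ) - 1) * F x ^ (N - 2) * f x with hg
  have hgcont : ContinuousOn g (Set.Icc vlo vhi) :=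
    (continuousOn_const.mul (hFcont.pow _)).mul hfcont
  have hsub : ∀ {c d : ℝ}, a ≤ c → c ≤ d → d ≤ b → Set.uIcc c d ⊆ Set.Icc vlo vhi := by
    intro c d h1 h2 h3
    rw [Set.uIcc_of_le h2]
    exact fun x hx => ⟨le_trans hav (le_trans h1 hx.1), le_trans hx.2 (le_trans h3 hbv)⟩
  rcases le_or_gt v a with hva | hva
  · have he : min (max v a) b = a := by rw [max_eq_right hva, min_eq_left hab]
    rw [he, intervalIntegral.integral_same,
      intervalIntegral.integral_congr (g := fun _ => (0:ℝ)) ?_, intervalIntegral.integral_zero]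
    intro x hx
    rw [Set.uIcc_of_le hab] at hx
    simp only
    rw [max_eq_right (by linarith [hx.1]), zero_mul]
  rcases le_or_gt b v with hvb | hvb
  · have he : min (max v a) b = b := by
      rw [max_eq_left (le_trans hab hvb), min_eq_right hvb]
    rw [he]
    refine intervalIntegral.integral_congr ?_
    intro x hx
    rw [Set.uIcc_of_le hab] at hx
    simp only
    rw [max_eq_left (by linarith [hx.2])]
    ring
  · have he : min (max v a) b = v := by
      rw [max_eq_left hva.le, min_eq_left hvb.le]
    rw [he]
    have hint1 : IntervalIntegrable (fun x => max (v - x) 0 * g x) MeasureTheory.volume a v := by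
      apply ContinuousOn.intervalIntegrable
      exact (((continuous_const.sub continuous_id).max continuous_const).continuousOn).mul
        (hgcont.mono (hsub (le_refl a) hva.le hvb.le))
    have hint2 : IntervalIntegrable (fun x => max (v - x) 0 * g x) MeasureTheory.volume v b := by
      apply ContinuousOn.intervalIntegrable
      exact (((continuous_const.sub continuous_id).max continuous_const).continuousOn).mul
        (hgcont.mono (hsub hva.le hvb.le (le_refl b)))
    rw [← intervalIntegral.integral_add_adjacent_intervals hint1 hint2]
    have h2 : (∫ x in v..b, max (v - x) 0 * g x) = 0 := by
      rw [intervalIntegral.integral_congr (g := fun _ => (0:ℝ)) ?_, intervalIntegral.integral_zero]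
      intro x hx
      rw [Set.uIcc_of_le hvb.le] at hx
      simp only
      rw [max_eq_right (by linarith [hx.1]), zero_mul]
    rw [h2, add_zero]
    refine intervalIntegral.integral_congr ?_
    intro x hx
    rw [Set.uIcc_of_le hva.le] at hx
    simp only
    rw [max_eq_left (by linarith [hx.2])]
    ring

end Aux2

/-- Interim payoff from entering the period-`t` auction, extended with `Π_{T+1} ≡ 0`. -/
noncomputable def PiPayoffExt (δ : ℝ) (N : ℕ) (K : ℝ) (T : ℕ) (r : ℕ → ℝ) (F f : ℝ → ℝ)
    (vt : ℕ → ℝ) (t : ℕ) (v : ℝ) : ℝ :=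
  if t ≤ T then
    δ ^ (t - 1) *
      ((∫ x in (vt t)..(min (max v (vt t)) (vt (t - 1))),
          (v - x) * ((N : ℝ) - 1) * F x ^ (N - 2) * f x)
        + (v - r t) * F (vt t) ^ (N - 1) - F (vt (t - 1)) ^ (N - 1) * K)
  else 0

section Aux3

variable {vlo vhi δ K : ℝ} {F f : ℝ → ℝ} {N T : ℕ} {r : ℕ → ℝ} {vt : ℕ → ℝ}

lemma Pi_diff_bounds (hN : 2 ≤ N) (hδ0 : 0 < δ)
    (hFderiv : ∀ x ∈ Set.Icc vlo vhi, HasDerivAt F (f x) x)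
    (hfcont : ContinuousOn f (Set.Icc vlo vhi))
    {t : ℕ} (htT : t ≤ T)
    (ha : vt t ∈ Set.Icc vlo vhi) (hb : vt (t - 1) ∈ Set.Icc vlo vhi)
    (hab : vt t ≤ vt (t - 1))
    (hgpos : ∀ x ∈ Set.Icc (vt t) (vt (t - 1)), 0 ≤ ((N : ℝ) - 1) * F x ^ (N - 2) * f x)
    {v1 v2 : ℝ} (hv : v1 ≤ v2) :
    δ ^ (t - 1) * ((v2 - v1) * F (vt t) ^ (N - 1))
        ≤ PiPayoffExt δ N K T r F f vt t v2 - PiPayoffExt δ N K T r F f vt t v1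
      ∧ PiPayoffExt δ N K T r F f vt t v2 - PiPayoffExt δ N K T r F f vt t v1
        ≤ δ ^ (t - 1) * ((v2 - v1) * F (vt (t - 1)) ^ (N - 1)) := by
  have hFcont : ContinuousOn F (Set.Icc vlo vhi) :=
    fun x hx => (hFderiv x hx).continuousAt.continuousWithinAt
  set a := vt t with hadef
  set b := vt (t - 1) with hbdef
  set g : ℝ → ℝ := fun x => ((N : ℝ) - 1) * F x ^ (N - 2) * f x with hg
  have hsub : Set.uIcc a b ⊆ Set.Icc vlo vhi := Set.uIcc_subset_Icc ha hb
  have hgcont : ContinuousOn g (Set.uIcc a b) :=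
    ((continuousOn_const.mul ((hFcont.mono hsub).pow _)).mul (hfcont.mono hsub))
  have hgint : IntervalIntegrable g MeasureTheory.volume a b :=
    hgcont.intervalIntegrable
  have hmint : ∀ v : ℝ, IntervalIntegrable (fun x => max (v - x) 0 * g x)
      MeasureTheory.volume a b := fun v =>
    ((((continuous_const.sub continuous_id).max continuous_const).continuousOn).mul
      hgcont).intervalIntegrable
  have hP : ∀ v : ℝ, PiPayoffExt δ N K T r F f vt t v
      = δ ^ (t - 1) * ((∫ x in a..b, max (v - x) 0 * g x)
          + (v - r t) * F a ^ (N - 1) - F b ^ (N - 1) * K) := by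
    intro v
    rw [PiPayoffExt, if_pos htT, max_rewrite hfcont hFcont hab ha.1 hb.2]
  have hIcc : ∀ x ∈ Set.Icc a b, x ∈ Set.Icc a b := fun x hx => hx
  have hmono1 : (∫ x in a..b, max (v1 - x) 0 * g x) ≤ ∫ x in a..b, max (v2 - x) 0 * g x := by
    refine intervalIntegral.integral_mono_on hab (hmint v1) (hmint v2) (fun x hx => ?_)
    exact mul_le_mul_of_nonneg_right
      (max_le_max (by linarith) le_rfl) (hgpos x hx)
  have hmono2 : (∫ x in a..b, max (v2 - x) 0 * g x)
      ≤ (∫ x in a..b, max (v1 - x) 0 * g x) + (v2 - v1) * (F b ^ (N - 1) - F a ^ (N - 1)) := by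
    have hptw : ∀ x ∈ Set.Icc a b,
        max (v2 - x) 0 * g x ≤ max (v1 - x) 0 * g x + (v2 - v1) * g x := by
      intro x hx
      have h1 : max (v2 - x) 0 ≤ max (v1 - x) 0 + (v2 - v1) := by
        refine max_le (by linarith [le_max_left (v1 - x) (0:ℝ)]) ?_
        linarith [le_max_right (v1 - x) (0:ℝ)]
      calc max (v2 - x) 0 * g x ≤ (max (v1 - x) 0 + (v2 - v1)) * g x :=
            mul_le_mul_of_nonneg_right h1 (hgpos x hx)
        _ = max (v1 - x) 0 * g x + (v2 - v1) * g x := by ring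
    have := intervalIntegral.integral_mono_on hab (hmint v2)
      ((hmint v1).add (hgint.const_mul (v2 - v1))) hptw
    rw [intervalIntegral.integral_add (hmint v1) (hgint.const_mul (v2 - v1)),
      intervalIntegral.integral_const_mul,
      G_ftc hN hFderiv hfcont ha hb] at this
    exact this
  have hδpow : (0:ℝ) < δ ^ (t - 1) := pow_pos hδ0 _
  constructor
  · rw [hP v1, hP v2]
    nlinarith [hmono1]
  · rw [hP v1, hP v2]
    nlinarith [hmono2]

end Aux3


/-- Monotone comparison corollary: for `1 ≤ t < t' ≤ T + 1` (where either `t' ≤ T` and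
`F(v_{t'}) > 0`, or `t = T`, `t' = T + 1` and `F(v_T) > 0`):
(i) if `Π_t(v_t) ≥ Π_{t'}(v_t)` then `Π_t(v) > Π_{t'}(v)` for every `v ∈ (v_t, vhi]`;
(ii) if `Π_t(v_t) ≤ Π_{t'}(v_t)` then `Π_t(v) < Π_{t'}(v)` for every `v ∈ [vlo, v_t)`. -/
theorem monotone_comparison
    (vlo vhi : ℝ) (hlohi : vlo < vhi)
    (N : ℕ) (hN : 2 ≤ N)
    (K : ℝ) (hK : 0 < K)
    (δ : ℝ) (hδ0 : 0 < δ) (hδ1 : δ < 1)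
    (T : ℕ) (hT : 1 ≤ T)
    (r : ℕ → ℝ)
    (F f : ℝ → ℝ)
    (hFderiv : ∀ x ∈ Set.Icc vlo vhi, HasDerivAt F (f x) x)
    (hfcont : ContinuousOn f (Set.Icc vlo vhi))
    (hFmono : MonotoneOn F (Set.Icc vlo vhi))
    (vt : ℕ → ℝ)
    (hv0 : vt 0 = vhi)
    (hvmono : ∀ t, 1 ≤ t → t ≤ T → vt t ≤ vt (t - 1))
    (hvT : vlo ≤ vt T)
    (t t' : ℕ) (ht : 1 ≤ t) (htt' : t < t') (ht' : t' ≤ T + 1)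
    (hcase : (t' ≤ T ∧ 0 < F (vt t')) ∨ (t = T ∧ t' = T + 1 ∧ 0 < F (vt T))) :
    (PiPayoffExt δ N K T r F f vt t' (vt t) ≤ PiPayoffExt δ N K T r F f vt t (vt t) →
      ∀ v, vt t < v → v ≤ vhi →
        PiPayoffExt δ N K T r F f vt t' v < PiPayoffExt δ N K T r F f vt t v) ∧
    (PiPayoffExt δ N K T r F f vt t (vt t) ≤ PiPayoffExt δ N K T r F f vt t' (vt t) →
      ∀ v, vlo ≤ v → v < vt t →
        PiPayoffExt δ N K T r F f vt t v < PiPayoffExt δ N K T r F f vt t' v) := by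
  have hchain : ∀ j, j ≤ T → ∀ i, i ≤ j → vt j ≤ vt i := by
    intro j
    induction j with
    | zero =>
      intro _ i hi
      have : i = 0 := by omega
      subst this; exact le_rfl
    | succ n ih =>
      intro hj i hi
      rcases Nat.eq_or_lt_of_le hi with h | h
      · rw [h]
      · have h1 : vt (n + 1) ≤ vt n := by
          have := hvmono (n + 1) (by omega) hj
          simpa using this
        exact le_trans h1 (ih (by omega) i (by omega))
  have hmem : ∀ s, s ≤ T → vt s ∈ Set.Icc vlo vhi := by
    intro s hs
    refine ⟨le_trans hvT (hchain T le_rfl s hs), ?_⟩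
    rw [← hv0]
    exact hchain s hs 0 (Nat.zero_le _)
  have htT : t ≤ T := by omega
  have hfnn := f_nonneg hlohi hFderiv hFmono
  have hFt : 0 < F (vt t) := by
    rcases hcase with ⟨ht'T, hFt'⟩ | ⟨hteq, _, hFT⟩
    · exact lt_of_lt_of_le hFt'
        (hFmono (hmem t' ht'T) (hmem t htT) (hchain t' ht'T t (le_of_lt htt')))
    · rw [hteq]; exact hFT
  have hN1 : (0:ℝ) ≤ (N : ℝ) - 1 := by
    have h2 : (2:ℝ) ≤ (N : ℝ) := by exact_mod_cast hN
    linarith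
  have hgpos : ∀ s, s ≤ T → 0 < F (vt s) →
      ∀ x ∈ Set.Icc (vt s) (vt (s - 1)), 0 ≤ ((N : ℝ) - 1) * F x ^ (N - 2) * f x := by
    intro s hs hFs x hx
    have hxI : x ∈ Set.Icc vlo vhi :=
      ⟨le_trans (hmem s hs).1 hx.1, le_trans hx.2 (hmem (s - 1) (by omega)).2⟩
    have hFx : 0 < F x := lt_of_lt_of_le hFs (hFmono (hmem s hs) hxI hx.1)
    exact mul_nonneg (mul_nonneg hN1 (pow_nonneg hFx.le _)) (hfnn x hxI)
  have hkey : ∀ v1 v2 : ℝ, v1 < v2 →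
      PiPayoffExt δ N K T r F f vt t v1 - PiPayoffExt δ N K T r F f vt t' v1
        < PiPayoffExt δ N K T r F f vt t v2 - PiPayoffExt δ N K T r F f vt t' v2 := by
    intro v1 v2 hv
    have hBt := Pi_diff_bounds (K := K) (r := r) hN hδ0 hFderiv hfcont htT (hmem t htT)
      (hmem (t - 1) (by omega)) (hvmono t ht htT) (hgpos t htT hFt) hv.le
    have hGpos : 0 < F (vt t) ^ (N - 1) := pow_pos hFt _
    rcases hcase with ⟨ht'T, hFt'⟩ | ⟨hteq, ht'eq, hFT⟩
    · have hBt' := Pi_diff_bounds (K := K) (r := r) hN hδ0 hFderiv hfcont ht'T (hmem t' ht'T)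
        (hmem (t' - 1) (by omega)) (hvmono t' (by omega) ht'T) (hgpos t' ht'T hFt') hv.le
      have h1 : vt (t' - 1) ≤ vt t := hchain (t' - 1) (by omega) t (by omega)
      have hFt'1 : 0 < F (vt (t' - 1)) := lt_of_lt_of_le hFt'
        (hFmono (hmem t' ht'T) (hmem (t' - 1) (by omega)) (hvmono t' (by omega) ht'T))
      have hGle : F (vt (t' - 1)) ^ (N - 1) ≤ F (vt t) ^ (N - 1) :=
        pow_le_pow_left₀ hFt'1.le (hFmono (hmem (t' - 1) (by omega)) (hmem t htT) h1) _
      have hδlt : δ ^ (t' - 1) < δ ^ (t - 1) :=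
        pow_lt_pow_right_of_lt_one₀ hδ0 hδ1 (by omega)
      have hA : δ ^ (t' - 1) * ((v2 - v1) * F (vt (t' - 1)) ^ (N - 1))
          ≤ δ ^ (t' - 1) * ((v2 - v1) * F (vt t) ^ (N - 1)) := by
        apply mul_le_mul_of_nonneg_left _ (pow_pos hδ0 _).le
        apply mul_le_mul_of_nonneg_left hGle (by linarith)
      have hB : δ ^ (t' - 1) * ((v2 - v1) * F (vt t) ^ (N - 1))
          < δ ^ (t - 1) * ((v2 - v1) * F (vt t) ^ (N - 1)) :=
        mul_lt_mul_of_pos_right hδlt (mul_pos (by linarith) hGpos)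
      linarith [hBt.1, hBt'.2]
    · have hP0 : ∀ v, PiPayoffExt δ N K T r F f vt t' v = 0 := by
        intro v; rw [PiPayoffExt, if_neg (by omega)]
      rw [hP0, hP0]
      have : 0 < δ ^ (t - 1) * ((v2 - v1) * F (vt t) ^ (N - 1)) :=
        mul_pos (pow_pos hδ0 _) (mul_pos (by linarith) hGpos)
      linarith [hBt.1]
  refine ⟨?_, ?_⟩
  · intro h v hv1 _
    have := hkey (vt t) v hv1
    linarith
  · intro h v _ hv2
    have := hkey v (vt t) hv2
    linarith
end
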